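/- arXiv:1808.09734 — 5 statements merged into one kernel-verified Lean document; each statement's English description precedes it below -/
import Mathlib

section
/- Let S be a nonempty subset of the Euclidean plane ℝ² and let f : S → ℝ² be 1-Lipschitz, i.e. ‖f(x) − f(y)‖ ≤ ‖x − y‖ for all x, y ∈ S. Then for every set T with S ⊆ T ⊆ ℝ² there exists a map F : T → ℝ² such that F agrees with f on S, F is 1-Lipschitz on T, and the image F(T) is contained in the closure of the convex hull of f(S). -/
set_option maxHeartbeats 1000000

open Finset Metric

local notation "⟪" x ", " y "⟫" => @inner ℝ _ _ x y

variable {H : Type*} [NormedAddCommGroup H] [InnerProductSpace ℝ H] [FiniteDimensional ℝ H]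

/-- Obtuse-angle property of the metric projection onto a closed convex set. -/
lemma kv_proj_exists (C : Set H) (hconv : Convex ℝ C) (hcl : IsClosed C) (hne : C.Nonempty)
    (u : H) : ∃ v ∈ C, ∀ w ∈ C, ⟪u - v, w - v⟫ ≤ 0 := by
  obtain ⟨v, hvC, hv⟩ := exists_norm_eq_iInf_of_complete_convex hne hcl.isComplete hconv u
  exact ⟨v, hvC, (norm_eq_iInf_iff_real_inner_le_zero hconv hvC).1 hv⟩

/-- Kirszbraun's lemma: finitely many balls. -/
lemma kv_finite {ι : Type*} [Fintype ι] (x y : ι → H) (p : H)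
    (hxy : ∀ i j, ‖y i - y j‖ ≤ ‖x i - x j‖) :
    ∃ v : H, ∀ i, ‖v - y i‖ ≤ ‖p - x i‖ := by
  by_cases hι : Nonempty ι
  swap
  · exact ⟨0, fun i => (hι ⟨i⟩).elim⟩
  by_cases hp : ∃ i, x i = p
  · obtain ⟨i0, hi0⟩ := hp
    refine ⟨y i0, fun j => ?_⟩
    have := hxy i0 j
    rwa [hi0] at this
  push_neg at hp
  have ha : ∀ i, 0 < ‖p - x i‖ := fun i => by
    rw [norm_pos_iff, sub_ne_zero]; exact fun h => hp i h.symm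
  set a : ι → ℝ := fun i => ‖p - x i‖ with ha_def
  have huniv : (Finset.univ : Finset ι).Nonempty := univ_nonempty
  set φ : H → ℝ := fun v => univ.sup' huniv (fun i => ‖v - y i‖ / a i) with hφ_def
  classical
  have hφ_ge : ∀ v i, ‖v - y i‖ / a i ≤ φ v := fun v i => by
    simp only [hφ_def]
    exact Finset.le_sup' (fun i => ‖v - y i‖ / a i) (mem_univ i)
  have hφ_cont : Continuous φ := by
    simp only [hφ_def]
    apply Continuous.finset_sup'_apply (f := fun i (v : H) => ‖v - y i‖ / a i) huniv
    intro i _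
    exact (Continuous.norm (by continuity)).div_const _
  -- existence of a global minimizer
  obtain ⟨i0⟩ := hι
  have hφ0 : 0 ≤ φ (y i0) := le_trans (by simp) (hφ_ge (y i0) i0)
  set K := closedBall (y i0) (a i0 * φ (y i0)) with hK_def
  have hKc : IsCompact K := isCompact_closedBall _ _
  have hKne : (y i0) ∈ K := mem_closedBall_self (mul_nonneg (ha i0).le hφ0)
  obtain ⟨v₀, hv₀K, hv₀min⟩ := hKc.exists_isMinOn ⟨_, hKne⟩ hφ_cont.continuousOn
  have hmin : ∀ v, φ v₀ ≤ φ v := by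
    intro v
    by_cases hv : v ∈ K
    · exact hv₀min hv
    · have h1 : a i0 * φ (y i0) < ‖v - y i0‖ := by
        rw [hK_def, mem_closedBall, dist_eq_norm] at hv; linarith [not_le.1 hv]
      have h2 : φ (y i0) < ‖v - y i0‖ / a i0 := by
        rw [lt_div_iff₀ (ha i0)]; linarith [h1]
      exact le_trans (hv₀min hKne) (le_trans h2.le (hφ_ge v i0))
  set lam := φ v₀ with hlam_def
  by_cases hlam : lam ≤ 1
  · refine ⟨v₀, fun i => ?_⟩
    have := le_trans (hφ_ge v₀ i) hlam
    rwa [div_le_one (ha i)] at this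
  push_neg at hlam
  exfalso
  -- active indices
  set I : Finset ι := univ.filter (fun i => ‖v₀ - y i‖ = lam * a i) with hI_def
  have hIne : I.Nonempty := by
    obtain ⟨i, -, hi⟩ := exists_mem_eq_sup' huniv (fun i => ‖v₀ - y i‖ / a i)
    refine ⟨i, mem_filter.2 ⟨mem_univ i, ?_⟩⟩
    have hlam' : lam = ‖v₀ - y i‖ / a i := by
      simp only [hlam_def, hφ_def]; exact hi
    rw [hlam', div_mul_cancel₀ _ (ha i).ne']
  set P : Finset H := I.image y with hP_def
  have hPne : P.Nonempty := hIne.image y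
  -- v₀ lies in the convex hull of the active points
  have hv₀hull : v₀ ∈ convexHull ℝ (P : Set H) := by
    by_contra hout
    have hfin : (P : Set H).Finite := P.finite_toSet
    have hclosed : IsClosed (convexHull ℝ (P : Set H)) := hfin.isClosed_convexHull ℝ
    have hconv : Convex ℝ (convexHull ℝ (P : Set H)) := convex_convexHull _ _
    obtain ⟨q1, hq1⟩ := hPne
    have hne : (convexHull ℝ (P : Set H)).Nonempty :=
      ⟨q1, subset_convexHull ℝ _ (by exact_mod_cast hq1)⟩
    obtain ⟨u', hu'C, hu'⟩ := kv_proj_exists _ hconv hclosed hne v₀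
    set u := u' - v₀ with hu_def
    have hune : u ≠ 0 := by
      rw [hu_def, sub_ne_zero]
      rintro rfl
      exact hout hu'C
    have hu2 : 0 < ‖u‖ ^ 2 := by have := norm_pos_iff.2 hune; positivity
    have hkey : ∀ i ∈ I, ‖u‖ ^ 2 ≤ ⟪u, y i - v₀⟫ := by
      intro i hi
      have hyi : y i ∈ convexHull ℝ (P : Set H) :=
        subset_convexHull ℝ _ (by exact_mod_cast mem_image_of_mem y hi)
      have h1 := hu' (y i) hyi
      have : ⟪u, y i - v₀⟫ = -⟪v₀ - u', y i - u'⟫ + ‖u‖ ^ 2 := by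
        rw [hu_def, ← real_inner_self_eq_norm_sq]
        rw [show y i - v₀ = (y i - u') + (u' - v₀) by abel, inner_add_right]
        rw [show (v₀ - u' : H) = -(u' - v₀) by abel, inner_neg_left]
        ring
      rw [this]; linarith
    -- choose step size
    have hun : 0 < ‖u‖ := norm_pos_iff.2 hune
    have hstrict : ∀ i, i ∉ I → ‖v₀ - y i‖ < lam * a i := by
      intro i hi
      have hle : ‖v₀ - y i‖ / a i ≤ lam := hφ_ge v₀ i
      have hne' : ‖v₀ - y i‖ ≠ lam * a i := by
        rw [hI_def] at hi; simpa using hi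
      rcases lt_or_eq_of_le ((div_le_iff₀ (ha i)).1 hle) with h | h
      · exact h
      · exact absurd h hne'
    set b : ι → ℝ := fun i => if i ∈ I then 1 else (lam * a i - ‖v₀ - y i‖) / (2 * ‖u‖) with hb_def
    have hbpos : ∀ i, 0 < b i := by
      intro i
      simp only [hb_def]
      by_cases hi : i ∈ I
      · simp [hi]
      · simp only [hi, if_false]
        exact div_pos (by linarith [hstrict i hi]) (by positivity)
    set t : ℝ := univ.inf' huniv b with ht_def
    have htpos : 0 < t := (lt_inf'_iff _).2 fun i _ => hbpos i
    have htle : ∀ i, t ≤ b i := fun i => inf'_le _ (mem_univ i)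
    have ht1 : t ≤ 1 := by
      obtain ⟨i, hi⟩ := hIne
      have h := htle i
      simp only [hb_def, if_pos hi] at h
      exact h
    -- the perturbed point has strictly smaller φ
    have hlt : φ (v₀ + t • u) < lam := by
      rw [hφ_def, sup'_lt_iff]
      intro i _
      rw [div_lt_iff₀ (ha i)]
      by_cases hi : i ∈ I
      · have hAi : ‖v₀ - y i‖ = lam * a i := by rw [hI_def] at hi; simpa using hi
        have h1 : ‖v₀ + t • u - y i‖ ^ 2 < ‖v₀ - y i‖ ^ 2 := by
          have he : v₀ + t • u - y i = (v₀ - y i) + t • u := by abel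
          rw [he, norm_add_sq_real]
          have h2 : ⟪v₀ - y i, t • u⟫ = -(t * ⟪u, y i - v₀⟫) := by
            rw [real_inner_smul_right, show (v₀ - y i : H) = -(y i - v₀) by abel,
              inner_neg_left, real_inner_comm]
            ring
          rw [h2, norm_smul, Real.norm_eq_abs, abs_of_pos htpos, mul_pow]
          have h3 := hkey i hi
          nlinarith [mul_le_mul_of_nonneg_left h3 htpos.le,
            mul_nonneg (mul_pos htpos hu2).le (sub_nonneg.2 ht1),
            mul_pos htpos hu2]
        have : ‖v₀ + t • u - y i‖ < ‖v₀ - y i‖ := by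
          nlinarith [norm_nonneg (v₀ + t • u - y i), norm_nonneg (v₀ - y i)]
        calc ‖v₀ + t • u - y i‖ < ‖v₀ - y i‖ := this
          _ = lam * a i := hAi
      · have hbi : b i = (lam * a i - ‖v₀ - y i‖) / (2 * ‖u‖) := by
          simp only [hb_def, if_neg hi]
        have h1 : ‖v₀ + t • u - y i‖ ≤ ‖v₀ - y i‖ + t * ‖u‖ := by
          calc ‖v₀ + t • u - y i‖ = ‖(v₀ - y i) + t • u‖ := by
                rw [show v₀ + t • u - y i = (v₀ - y i) + t • u by abel]
            _ ≤ ‖v₀ - y i‖ + ‖t • u‖ := norm_add_le _ _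
            _ = ‖v₀ - y i‖ + t * ‖u‖ := by rw [norm_smul, Real.norm_eq_abs, abs_of_pos htpos]
        have h2 : t * ‖u‖ ≤ (lam * a i - ‖v₀ - y i‖) / 2 := by
          have ht' : t ≤ (lam * a i - ‖v₀ - y i‖) / (2 * ‖u‖) := hbi ▸ htle i
          calc t * ‖u‖ ≤ (lam * a i - ‖v₀ - y i‖) / (2 * ‖u‖) * ‖u‖ :=
                mul_le_mul_of_nonneg_right ht' hun.le
            _ = (lam * a i - ‖v₀ - y i‖) / 2 := by field_simp
        have hgap : 0 < lam * a i - ‖v₀ - y i‖ := by linarith [hstrict i hi]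
        linarith
    exact absurd (hmin (v₀ + t • u)) (not_le.2 hlt)
  -- convex combination representation
  rw [hP_def, Finset.convexHull_eq] at hv₀hull
  obtain ⟨w, hw0, hw1, hwc⟩ := hv₀hull
  rw [centerMass_eq_of_sum_1 _ _ hw1] at hwc
  simp only [id] at hwc
  -- choice of indices
  have hgex : ∀ q ∈ P, ∃ i, i ∈ I ∧ y i = q := by
    intro q hq; rw [hP_def, mem_image] at hq; obtain ⟨i, hi, hyi⟩ := hq; exact ⟨i, hi, hyi⟩
  classical
  set g : H → ι := fun q => if h : ∃ i, i ∈ I ∧ y i = q then h.choose else i0 with hg_def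
  have hgI : ∀ q ∈ P, g q ∈ I := by
    intro q hq
    rw [hg_def]; simp only
    rw [dif_pos (hgex q hq)]
    exact (hgex q hq).choose_spec.1
  have hgy : ∀ q ∈ P, y (g q) = q := by
    intro q hq
    rw [hg_def]; simp only
    rw [dif_pos (hgex q hq)]
    exact (hgex q hq).choose_spec.2
  set A : H → ℝ := fun q => a (g q) with hA_def
  set X : H → H := fun q => x (g q) - p with hX_def
  have hApos : ∀ q, 0 < A q := fun q => ha _
  have hAct : ∀ q ∈ P, ‖q - v₀‖ = lam * A q := by
    intro q hq
    have h1 := hgI q hq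
    rw [hI_def, mem_filter] at h1
    have h2 : ‖v₀ - y (g q)‖ = lam * a (g q) := h1.2
    rw [hA_def]; simp only
    rw [norm_sub_rev]
    conv_lhs => rw [← hgy q hq]
    exact h2
  have hXn : ∀ q, ‖X q‖ = A q := fun q => by rw [hX_def, hA_def]; simp only; rw [norm_sub_rev]
  have hXd : ∀ q ∈ P, ∀ r ∈ P, ‖q - r‖ ≤ ‖X q - X r‖ := by
    intro q hq r hr
    rw [hX_def]; simp only
    rw [show x (g q) - p - (x (g r) - p) = x (g q) - x (g r) by abel]
    conv_lhs => rw [← hgy q hq, ← hgy r hr]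
    exact hxy _ _
  -- the key pairwise inequality
  have key : ∀ q ∈ P, ∀ r ∈ P,
      (lam ^ 2 - 1) / 2 * (A q ^ 2 + A r ^ 2) + ⟪X q, X r⟫ ≤ ⟪q - v₀, r - v₀⟫ := by
    intro q hq r hr
    have e1 : ‖q - r‖ ^ 2 = ‖q - v₀‖ ^ 2 - 2 * ⟪q - v₀, r - v₀⟫ + ‖r - v₀‖ ^ 2 := by
      rw [show q - r = (q - v₀) - (r - v₀) by abel, norm_sub_sq_real]
    have e2 : ‖X q - X r‖ ^ 2 = ‖X q‖ ^ 2 - 2 * ⟪X q, X r⟫ + ‖X r‖ ^ 2 := norm_sub_sq_real _ _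
    have e3 := hXd q hq r hr
    have e4 : ‖q - r‖ ^ 2 ≤ ‖X q - X r‖ ^ 2 := by
      nlinarith [norm_nonneg (q - r), norm_nonneg (X q - X r)]
    rw [hAct q hq, hAct r hr] at e1
    rw [hXn q, hXn r] at e2
    nlinarith [e1, e2, e4]
  -- summation
  set Z : H := ∑ q ∈ P, w q • (q - v₀) with hZ_def
  have hZ0 : Z = 0 := by
    rw [hZ_def]
    simp only [smul_sub]
    rw [Finset.sum_sub_distrib, hwc, ← Finset.sum_smul, hw1, one_smul, sub_self]
  have hS1 : ∑ q ∈ P, ∑ r ∈ P, w q * w r * ⟪q - v₀, r - v₀⟫ = 0 := by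
    have : ∀ q ∈ P, ∑ r ∈ P, w q * w r * ⟪q - v₀, r - v₀⟫ = ⟪w q • (q - v₀), Z⟫ := by
      intro q _
      rw [hZ_def, inner_sum]
      apply Finset.sum_congr rfl
      intro r _
      rw [real_inner_smul_left, real_inner_smul_right]
      ring
    rw [Finset.sum_congr rfl this, ← sum_inner, ← hZ_def, hZ0, inner_zero_left]
  set ZX : H := ∑ q ∈ P, w q • X q with hZX_def
  have hS2 : ∑ q ∈ P, ∑ r ∈ P, w q * w r * ⟪X q, X r⟫ = ⟪ZX, ZX⟫ := by
    have : ∀ q ∈ P, ∑ r ∈ P, w q * w r * ⟪X q, X r⟫ = ⟪w q • X q, ZX⟫ := by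
      intro q _
      rw [hZX_def, inner_sum]
      apply Finset.sum_congr rfl
      intro r _
      rw [real_inner_smul_left, real_inner_smul_right]
      ring
    rw [Finset.sum_congr rfl this, ← sum_inner]
  have hS2nn : 0 ≤ ∑ q ∈ P, ∑ r ∈ P, w q * w r * ⟪X q, X r⟫ := by
    rw [hS2]; exact real_inner_self_nonneg
  have hS3 : ∑ q ∈ P, ∑ r ∈ P, w q * w r * ((lam ^ 2 - 1) / 2 * (A q ^ 2 + A r ^ 2))
      = (lam ^ 2 - 1) * ∑ q ∈ P, w q * A q ^ 2 := by
    have expand : ∀ q ∈ P, ∑ r ∈ P, w q * w r * ((lam ^ 2 - 1) / 2 * (A q ^ 2 + A r ^ 2))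
        = (lam ^ 2 - 1) / 2 * (w q * A q ^ 2 * (∑ r ∈ P, w r)
          + w q * ∑ r ∈ P, w r * A r ^ 2) := by
      intro q _
      rw [Finset.mul_sum, Finset.mul_sum, ← Finset.sum_add_distrib, Finset.mul_sum]
      apply Finset.sum_congr rfl
      intro r _
      ring
    rw [Finset.sum_congr rfl expand]
    rw [hw1]; simp only [mul_one]
    rw [← Finset.mul_sum, Finset.sum_add_distrib, ← Finset.sum_mul, hw1]
    ring
  have hterm : ∀ q ∈ P, ∀ r ∈ P,
      w q * w r * ((lam ^ 2 - 1) / 2 * (A q ^ 2 + A r ^ 2)) + w q * w r * ⟪X q, X r⟫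
        ≤ w q * w r * ⟪q - v₀, r - v₀⟫ := by
    intro q hq r hr
    have hwnn : 0 ≤ w q * w r := mul_nonneg (hw0 q hq) (hw0 r hr)
    have := key q hq r hr
    nlinarith [mul_le_mul_of_nonneg_left this hwnn]
  have hsumineq : ∑ q ∈ P, ∑ r ∈ P, (w q * w r * ((lam ^ 2 - 1) / 2 * (A q ^ 2 + A r ^ 2))
        + w q * w r * ⟪X q, X r⟫)
      ≤ ∑ q ∈ P, ∑ r ∈ P, w q * w r * ⟪q - v₀, r - v₀⟫ := by
    apply Finset.sum_le_sum
    intro q hq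
    apply Finset.sum_le_sum
    intro r hr
    exact hterm q hq r hr
  simp only [Finset.sum_add_distrib] at hsumineq
  rw [hS1, hS3] at hsumineq
  -- positivity of the remaining sum
  obtain ⟨q0, hq0P, hq0⟩ : ∃ q ∈ P, w q ≠ 0 := by
    by_contra hc
    push_neg at hc
    rw [Finset.sum_congr rfl (fun q hq => hc q hq)] at hw1
    simp at hw1
  have hq0pos : 0 < w q0 := lt_of_le_of_ne (hw0 q0 hq0P) (Ne.symm hq0)
  have hpos : 0 < ∑ q ∈ P, w q * A q ^ 2 := by
    have h1 : 0 < w q0 * A q0 ^ 2 := by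
      have := hApos q0; positivity
    refine lt_of_lt_of_le h1
      (Finset.single_le_sum (f := fun q => w q * A q ^ 2) (fun q hq => ?_) hq0P)
    exact mul_nonneg (hw0 q hq) (sq_nonneg _)
  nlinarith [hsumineq, hS2nn,
    mul_pos (mul_pos (show (0:ℝ) < lam - 1 by linarith) (show (0:ℝ) < lam + 1 by linarith)) hpos]

/-- One-point extension: the intersection of all constraint balls is nonempty. -/
lemma kv_one_point (S : Set H) (hS : S.Nonempty) (f : H → H)
    (hf : ∀ x ∈ S, ∀ y ∈ S, ‖f x - f y‖ ≤ ‖x - y‖) (p : H) :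
    ∃ v : H, ∀ x ∈ S, ‖v - f x‖ ≤ ‖p - x‖ := by
  classical
  obtain ⟨x₀, hx₀⟩ := hS
  have hcompact : IsCompact (closedBall (f x₀) ‖p - x₀‖) := isCompact_closedBall _ _
  have hmain : (closedBall (f x₀) ‖p - x₀‖ ∩
      ⋂ z : S, closedBall (f z.1) ‖p - z.1‖).Nonempty := by
    apply hcompact.inter_iInter_nonempty
    · exact fun z => isClosed_closedBall
    · intro u
      -- finite subfamily
      set u' : Finset S := insert ⟨x₀, hx₀⟩ u with hu'_def
      obtain ⟨v, hv⟩ := kv_finite (H := H) (ι := {z // z ∈ u'})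
        (fun z => (z.1.1 : H)) (fun z => f z.1.1) p
        (fun i j => hf _ i.1.2 _ j.1.2)
      refine ⟨v, ?_, ?_⟩
      · have := hv ⟨⟨x₀, hx₀⟩, mem_insert_self _ _⟩
        rwa [mem_closedBall, dist_eq_norm]
      · rw [Set.mem_iInter₂]
        intro z hz
        have := hv ⟨z, mem_insert_of_mem hz⟩
        rwa [mem_closedBall, dist_eq_norm]
  obtain ⟨v, -, hv⟩ := hmain
  refine ⟨v, fun x hx => ?_⟩
  have := Set.mem_iInter.1 hv ⟨x, hx⟩
  rwa [mem_closedBall, dist_eq_norm] at this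

/-- Kirszbraun: extension to the whole space. -/
lemma kv_total (S : Set H) (hS : S.Nonempty) (f : H → H)
    (hf : ∀ x ∈ S, ∀ y ∈ S, ‖f x - f y‖ ≤ ‖x - y‖) :
    ∃ F : H → H, (∀ x ∈ S, F x = f x) ∧ ∀ x y, ‖F x - F y‖ ≤ ‖x - y‖ := by
  classical
  set 𝒢 : Set (Set (H × H)) := {G | (∀ x ∈ S, (x, f x) ∈ G) ∧
    ∀ a ∈ G, ∀ b ∈ G, ‖Prod.snd a - Prod.snd b‖ ≤ ‖Prod.fst a - Prod.fst b‖} with h𝒢_def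
  have h0 : {q : H × H | q.1 ∈ S ∧ q.2 = f q.1} ∈ 𝒢 := by
    constructor
    · exact fun x hx => ⟨hx, rfl⟩
    · rintro ⟨a1, a2⟩ ⟨ha, ha2⟩ ⟨b1, b2⟩ ⟨hb, hb2⟩
      simp only at ha ha2 hb hb2 ⊢
      rw [ha2, hb2]
      exact hf _ ha _ hb
  have hchain : ∀ c ⊆ 𝒢, IsChain (· ⊆ ·) c → c.Nonempty →
      ∃ ub ∈ 𝒢, ∀ s ∈ c, s ⊆ ub := by
    intro c hc hchain ⟨G₀, hG₀⟩
    refine ⟨⋃₀ c, ⟨?_, ?_⟩, fun s hs => Set.subset_sUnion_of_mem hs⟩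
    · intro x hx
      exact Set.mem_sUnion.2 ⟨G₀, hG₀, (hc hG₀).1 x hx⟩
    · rintro a ⟨Ga, hGa, haGa⟩ b ⟨Gb, hGb, hbGb⟩
      rcases hchain.total hGa hGb with h | h
      · exact (hc hGb).2 a (h haGa) b hbGb
      · exact (hc hGa).2 a haGa b (h hbGb)
  obtain ⟨G, hsub, hGmax⟩ := zorn_subset_nonempty 𝒢 hchain _ h0
  have hG𝒢 : G ∈ 𝒢 := hGmax.1
  have hfun : ∀ x y₁ y₂, (x, y₁) ∈ G → (x, y₂) ∈ G → y₁ = y₂ := by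
    intro x y₁ y₂ h1 h2
    have := hG𝒢.2 _ h1 _ h2
    simp only [sub_self, norm_zero] at this
    have : ‖y₁ - y₂‖ = 0 := le_antisymm this (norm_nonneg _)
    rwa [norm_eq_zero, sub_eq_zero] at this
  have htotal : ∀ p, ∃ q, (p, q) ∈ G := by
    intro p
    by_contra hp
    push_neg at hp
    set D : Set H := Prod.fst '' G with hD_def
    have hSD : S ⊆ D := fun x hx => ⟨(x, f x), hG𝒢.1 x hx, rfl⟩
    have hDne : D.Nonempty := hS.mono hSD
    set g : H → H := fun x => if h : ∃ y, (x, y) ∈ G then h.choose else 0 with hg_def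
    have hgG : ∀ x ∈ D, (x, g x) ∈ G := by
      rintro x ⟨⟨x', y⟩, hxy, rfl⟩
      have hex : ∃ y, (x', y) ∈ G := ⟨y, hxy⟩
      simp only [hg_def, dif_pos hex]
      exact hex.choose_spec
    have hgLip : ∀ x ∈ D, ∀ y ∈ D, ‖g x - g y‖ ≤ ‖x - y‖ :=
      fun x hx y hy => hG𝒢.2 _ (hgG x hx) _ (hgG y hy)
    obtain ⟨v, hv⟩ := kv_one_point D hDne g hgLip p
    have hG' : insert (p, v) G ∈ 𝒢 := by
      constructor
      · exact fun x hx => Set.mem_insert_of_mem _ (hG𝒢.1 x hx)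
      · rintro a (rfl | haG) b (rfl | hbG)
        · simp
        · have hb : b.1 ∈ D := ⟨b, hbG, rfl⟩
          have : g b.1 = b.2 := hfun b.1 _ _ (hgG _ hb) hbG
          simpa [this] using hv b.1 hb
        · have ha : a.1 ∈ D := ⟨a, haG, rfl⟩
          have : g a.1 = a.2 := hfun a.1 _ _ (hgG _ ha) haG
          have h := hv a.1 ha
          rw [this] at h
          calc ‖a.2 - v‖ = ‖v - a.2‖ := (norm_sub_rev _ _)
            _ ≤ ‖p - a.1‖ := h
            _ = ‖a.1 - p‖ := norm_sub_rev _ _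
        · exact hG𝒢.2 a haG b hbG
    have hnotin : (p, v) ∉ G := fun h => hp v h
    have := hGmax.2 hG' (Set.subset_insert _ _)
    exact hnotin (this (Set.mem_insert _ _))
  choose F hF using htotal
  refine ⟨F, fun x hx => hfun x _ _ (hF x) (hG𝒢.1 x hx), fun x y => hG𝒢.2 _ (hF x) _ (hF y)⟩

/-- The metric projection onto a nonempty closed convex set is 1-Lipschitz and fixes the set. -/
lemma kv_proj (C : Set H) (hconv : Convex ℝ C) (hcl : IsClosed C) (hne : C.Nonempty) :
    ∃ π : H → H, (∀ u, π u ∈ C) ∧ (∀ u ∈ C, π u = u) ∧ ∀ u v, ‖π u - π v‖ ≤ ‖u - v‖ := by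
  choose π hπC hπ using fun u => kv_proj_exists C hconv hcl hne u
  refine ⟨π, hπC, ?_, ?_⟩
  · intro u hu
    have h := hπ u u hu
    rw [real_inner_self_eq_norm_sq] at h
    have : ‖u - π u‖ = 0 := by nlinarith [norm_nonneg (u - π u)]
    rw [norm_eq_zero, sub_eq_zero] at this
    exact this.symm
  · intro u v
    have h1 := hπ u (π v) (hπC v)
    have h2 := hπ v (π u) (hπC u)
    have hkey : ‖π u - π v‖ ^ 2 ≤ ⟪u - v, π u - π v⟫ := by
      have e : ⟪u - v, π u - π v⟫ - ‖π u - π v‖ ^ 2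
          = -⟪u - π u, π v - π u⟫ - ⟪v - π v, π u - π v⟫ := by
        rw [← real_inner_self_eq_norm_sq]
        have e1 : (u - v : H) = (u - π u) - (v - π v) + (π u - π v) := by abel
        rw [e1, inner_add_left, inner_sub_left]
        have e2 : ⟪u - π u, π v - π u⟫ = -⟪u - π u, π u - π v⟫ := by
          rw [show (π v - π u : H) = -(π u - π v) by abel, inner_neg_right]
        rw [e2]
        ring
      linarith [sub_nonneg.2 (neg_nonneg.2 h1), sub_nonneg.2 (neg_nonneg.2 h2), e.ge,
        neg_nonneg.2 h1, neg_nonneg.2 h2, e.le]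
    have hcs : ⟪u - v, π u - π v⟫ ≤ ‖u - v‖ * ‖π u - π v‖ := real_inner_le_norm _ _
    by_cases hz : ‖π u - π v‖ = 0
    · rw [hz]; exact norm_nonneg _
    · have hpos : 0 < ‖π u - π v‖ := lt_of_le_of_ne (norm_nonneg _) (Ne.symm hz)
      nlinarith [hkey, hcs]

/-- Kirszbraun–Valentine extension theorem in the plane (Theorem 1.4 of the paper):
a 1-Lipschitz map defined on a nonempty subset `S` of `ℝ²` extends to any superset `T`
as a 1-Lipschitz map whose image lies in the closure of the convex hull of `f '' S`. -/
theorem kirszbraun_valentine_plane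
    (S : Set (EuclideanSpace ℝ (Fin 2))) (hS : S.Nonempty)
    (f : EuclideanSpace ℝ (Fin 2) → EuclideanSpace ℝ (Fin 2))
    (hf : ∀ x ∈ S, ∀ y ∈ S, ‖f x - f y‖ ≤ ‖x - y‖)
    (T : Set (EuclideanSpace ℝ (Fin 2))) (hST : S ⊆ T) :
    ∃ F : EuclideanSpace ℝ (Fin 2) → EuclideanSpace ℝ (Fin 2),
      (∀ x ∈ S, F x = f x) ∧
      (∀ x ∈ T, ∀ y ∈ T, ‖F x - F y‖ ≤ ‖x - y‖) ∧
      (∀ x ∈ T, F x ∈ closure (convexHull ℝ (f '' S))) := by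
  obtain ⟨G, hGS, hGLip⟩ := kv_total S hS f hf
  set C : Set (EuclideanSpace ℝ (Fin 2)) := closure (convexHull ℝ (f '' S)) with hC_def
  have hconv : Convex ℝ C := (convex_convexHull ℝ _).closure
  have hcl : IsClosed C := isClosed_closure
  have hCne : C.Nonempty := by
    obtain ⟨x₀, hx₀⟩ := hS
    exact ⟨f x₀, subset_closure (subset_convexHull ℝ _ (Set.mem_image_of_mem f hx₀))⟩
  obtain ⟨π, hπC, hπfix, hπLip⟩ := kv_proj C hconv hcl hCne
  refine ⟨π ∘ G, ?_, ?_, ?_⟩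
  · intro x hx
    have hfx : f x ∈ C := subset_closure (subset_convexHull ℝ _ (Set.mem_image_of_mem f hx))
    simp only [Function.comp_apply, hGS x hx, hπfix _ hfx]
  · intro x _ y _
    exact le_trans (hπLip (G x) (G y)) (hGLip x y)
  · intro x _
    exact hπC (G x)
end

section
/- Let S be a nonempty subset of the Euclidean plane ℝ², let f : S → ℝ² satisfy ‖f(x) − f(y)‖ ≤ ‖x − y‖ for all x, y ∈ S, and let p ∈ ℝ². Then there exists a point p' lying in the closure of the convex hull of the image f(S) such that ‖p' − f(x)‖ ≤ ‖p − x‖ for every x ∈ S. -/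
open Finset Metric

local notation "⟪" x ", " y "⟫" => @inner ℝ _ _ x y

variable {E : Type*} [NormedAddCommGroup E] [InnerProductSpace ℝ E]

private lemma double_sum_inner {ι : Type*} (s : Finset ι) (w : ι → ℝ) (v : ι → E) :
    ⟪∑ i ∈ s, w i • v i, ∑ j ∈ s, w j • v j⟫
      = ∑ i ∈ s, ∑ j ∈ s, w i * w j * ⟪v i, v j⟫ := by
  rw [sum_inner]
  refine Finset.sum_congr rfl fun i _ => ?_
  rw [inner_sum]
  refine Finset.sum_congr rfl fun j _ => ?_
  rw [real_inner_smul_left, real_inner_smul_right]; ring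

private lemma inner_eq_polar (a b : E) : ⟪a, b⟫ = (‖a‖ ^ 2 + ‖b‖ ^ 2 - ‖a - b‖ ^ 2) / 2 := by
  rw [norm_sub_sq_real]; ring

/-- Finite Kirszbraun lemma: the balls `closedBall (f x) ‖p - x‖`, `x ∈ t`, have a common
point inside the convex hull of `f '' t`. -/
private lemma kirszbraun_finset [FiniteDimensional ℝ E]
    (t : Finset E) (ht : t.Nonempty) (f : E → E)
    (hf : ∀ x ∈ t, ∀ y ∈ t, ‖f x - f y‖ ≤ ‖x - y‖) (p : E) :
    ∃ q ∈ convexHull ℝ (f '' ↑t), ∀ x ∈ t, ‖q - f x‖ ≤ ‖p - x‖ := by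
  classical
  set K : Set E := convexHull ℝ (f '' ↑t) with hKdef
  have hKconv : Convex ℝ K := convex_convexHull _ _
  have hKcomp : IsCompact K := (t.finite_toSet.image f).isCompact_convexHull ℝ
  have hKne : K.Nonempty := by
    obtain ⟨x, hx⟩ := ht
    exact ⟨f x, subset_convexHull _ _ ⟨x, hx, rfl⟩⟩
  set Φ : E → ℝ := fun q => t.sup' ht fun x => ‖q - f x‖ ^ 2 - ‖p - x‖ ^ 2 with hΦdef
  have hΦcont : Continuous Φ := by
    rw [hΦdef]
    exact Continuous.finset_sup'_apply (f := fun x q => ‖q - f x‖ ^ 2 - ‖p - x‖ ^ 2) ht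
      (fun x _ => by fun_prop)
  obtain ⟨q₀, hq₀K, hmin⟩ := hKcomp.exists_isMinOn hKne hΦcont.continuousOn
  set m := Φ q₀ with hmdef
  have hle : ∀ x ∈ t, ‖q₀ - f x‖ ^ 2 - ‖p - x‖ ^ 2 ≤ m := fun x hx =>
    Finset.le_sup' (fun x => ‖q₀ - f x‖ ^ 2 - ‖p - x‖ ^ 2) hx
  by_cases hm : m ≤ 0
  · refine ⟨q₀, hq₀K, fun x hx => ?_⟩
    have h := hle x hx
    have h2 : ‖q₀ - f x‖ ^ 2 ≤ ‖p - x‖ ^ 2 := by linarith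
    nlinarith [h2, norm_nonneg (q₀ - f x), norm_nonneg (p - x)]
  push_neg at hm
  exfalso
  set A : Finset E := t.filter (fun x => ‖q₀ - f x‖ ^ 2 - ‖p - x‖ ^ 2 = m) with hAdef
  have hAne : A.Nonempty := by
    obtain ⟨x, hx, hxe⟩ := t.exists_mem_eq_sup' ht (fun x => ‖q₀ - f x‖ ^ 2 - ‖p - x‖ ^ 2)
    exact ⟨x, Finset.mem_filter.2 ⟨hx, hxe.symm⟩⟩
  have hAact : ∀ x ∈ A, ‖q₀ - f x‖ ^ 2 = m + ‖p - x‖ ^ 2 := by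
    intro x hx
    have := (Finset.mem_filter.1 hx).2
    linarith
  have hAsub : A ⊆ t := Finset.filter_subset _ _
  set KA : Set E := convexHull ℝ (f '' ↑A) with hKAdef
  have hKAconv : Convex ℝ KA := convex_convexHull _ _
  have hKAcomp : IsCompact KA := (A.finite_toSet.image f).isCompact_convexHull ℝ
  have hKAne : KA.Nonempty := by
    obtain ⟨x, hx⟩ := hAne
    exact ⟨f x, subset_convexHull _ _ ⟨x, hx, rfl⟩⟩
  have hKAK : KA ⊆ K := convexHull_mono (Set.image_mono (f := f) (by exact_mod_cast hAsub))
  by_cases hq0A : q₀ ∈ KA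
  · -- main computation: contradiction with m > 0
    rw [hKAdef, _root_.convexHull_eq] at hq0A
    obtain ⟨ι, s, w, z, hw0, hw1, hz, hcm⟩ := hq0A
    rw [Finset.centerMass_eq_of_sum_1 _ _ hw1] at hcm
    have hch : ∀ i, ∃ x, i ∈ s → (x ∈ A ∧ f x = z i) := by
      intro i
      by_cases hi : i ∈ s
      · obtain ⟨x, hxA, hfx⟩ := hz i hi
        exact ⟨x, fun _ => ⟨hxA, hfx⟩⟩
      · exact ⟨p, fun h => absurd h hi⟩
    choose χ hχ using hch
    set a : ι → E := fun i => z i - q₀ with hadef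
    set b : ι → E := fun i => χ i - p with hbdef
    have h0 : ∑ i ∈ s, w i • a i = 0 := by
      simp only [hadef, smul_sub, Finset.sum_sub_distrib, hcm, ← Finset.sum_smul, hw1, one_smul,
        sub_self]
    have hna : ∀ i ∈ s, ‖a i‖ ^ 2 = m + ‖b i‖ ^ 2 := by
      intro i hi
      obtain ⟨hχA, hχf⟩ := hχ i hi
      have : ‖a i‖ = ‖q₀ - f (χ i)‖ := by rw [hχf, norm_sub_rev]
      rw [this, hAact _ hχA, hbdef]
      simp only [norm_sub_rev (χ i) p]
    have hab : ∀ i ∈ s, ∀ j ∈ s, m + ⟪b i, b j⟫ ≤ ⟪a i, a j⟫ := by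
      intro i hi j hj
      obtain ⟨hiA, hif⟩ := hχ i hi
      obtain ⟨hjA, hjf⟩ := hχ j hj
      have hsub : a i - a j = f (χ i) - f (χ j) := by
        simp only [hadef]; rw [hif, hjf]; abel
      have hbsub : b i - b j = χ i - χ j := by simp only [hbdef]; abel
      have hle2 : ‖a i - a j‖ ^ 2 ≤ ‖b i - b j‖ ^ 2 := by
        rw [hsub, hbsub]
        have := hf (χ i) (hAsub hiA) (χ j) (hAsub hjA)
        exact pow_le_pow_left₀ (norm_nonneg _) this 2
      rw [inner_eq_polar (a i) (a j), inner_eq_polar (b i) (b j), hna i hi, hna j hj]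
      linarith
    have hzero : (0 : ℝ) = ∑ i ∈ s, ∑ j ∈ s, w i * w j * ⟪a i, a j⟫ := by
      rw [← double_sum_inner, h0, inner_zero_left]
    have hlow : ∑ i ∈ s, ∑ j ∈ s, w i * w j * (m + ⟪b i, b j⟫)
        ≤ ∑ i ∈ s, ∑ j ∈ s, w i * w j * ⟪a i, a j⟫ := by
      refine Finset.sum_le_sum fun i hi => Finset.sum_le_sum fun j hj => ?_
      exact mul_le_mul_of_nonneg_left (hab i hi j hj) (mul_nonneg (hw0 i hi) (hw0 j hj))
    have hsplit : ∑ i ∈ s, ∑ j ∈ s, w i * w j * (m + ⟪b i, b j⟫)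
        = m + ⟪∑ i ∈ s, w i • b i, ∑ j ∈ s, w j • b j⟫ := by
      have e1 : ∑ i ∈ s, ∑ j ∈ s, w i * w j * (m + ⟪b i, b j⟫)
          = (∑ i ∈ s, ∑ j ∈ s, w i * w j * m) + ∑ i ∈ s, ∑ j ∈ s, w i * w j * ⟪b i, b j⟫ := by
        rw [← Finset.sum_add_distrib]
        refine Finset.sum_congr rfl fun i _ => ?_
        rw [← Finset.sum_add_distrib]
        refine Finset.sum_congr rfl fun j _ => ?_
        ring
      have e2 : (∑ i ∈ s, ∑ j ∈ s, w i * w j * m) = m := by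
        have h3 : ∀ i ∈ s, ∑ j ∈ s, w i * w j * m = w i * m := by
          intro i _
          calc ∑ j ∈ s, w i * w j * m = (∑ j ∈ s, w j) * (w i * m) := by
                rw [Finset.sum_mul]; exact Finset.sum_congr rfl fun j _ => by ring
            _ = w i * m := by rw [hw1, one_mul]
        rw [Finset.sum_congr rfl h3, ← Finset.sum_mul, hw1, one_mul]
      rw [e1, e2, double_sum_inner]
    have hnn : (0:ℝ) ≤ ⟪∑ i ∈ s, w i • b i, ∑ j ∈ s, w j • b j⟫ := real_inner_self_nonneg
    rw [hsplit] at hlow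
    linarith [hlow, hzero.ge]
  · -- separation: contradiction with minimality of Φ on K
    obtain ⟨zz, hzzKA, hzz⟩ := exists_norm_eq_iInf_of_complete_convex hKAne
      hKAcomp.isClosed.isComplete hKAconv q₀
    have hchar := (norm_eq_iInf_iff_real_inner_le_zero hKAconv hzzKA).1 hzz
    set v : E := zz - q₀ with hvdef
    set δ : ℝ := ‖v‖ ^ 2 with hδdef
    have hvne : v ≠ 0 := by
      intro h
      apply hq0A
      have : zz = q₀ := by rwa [hvdef, sub_eq_zero] at h
      rwa [← this]
    have hδpos : 0 < δ := by rw [hδdef]; exact pow_pos (norm_pos_iff.2 hvne) 2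
    have hsep : ∀ x ∈ A, δ ≤ ⟪v, f x - q₀⟫ := by
      intro x hx
      have h1 : ⟪q₀ - zz, f x - zz⟫ ≤ 0 :=
        hchar _ (subset_convexHull _ _ ⟨x, hx, rfl⟩)
      have h2 : f x - q₀ = (f x - zz) + v := by rw [hvdef]; abel
      rw [h2, inner_add_right]
      have h3 : ⟪v, f x - zz⟫ = -⟪q₀ - zz, f x - zz⟫ := by
        have hv' : v = -(q₀ - zz) := by rw [hvdef]; abel
        rw [hv', inner_neg_left]
      have h4 : ⟪v, v⟫ = δ := real_inner_self_eq_norm_sq v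
      rw [h3, h4]
      linarith
    -- expand the norm along the segment
    have hexp : ∀ (x : E) (s : ℝ), ‖q₀ + s • v - f x‖ ^ 2
        = ‖q₀ - f x‖ ^ 2 + 2 * s * ⟪q₀ - f x, v⟫ + s ^ 2 * δ := by
      intro x s
      have h : q₀ + s • v - f x = (q₀ - f x) + s • v := by abel
      rw [h, norm_add_sq_real, real_inner_smul_right, norm_smul]
      simp [hδdef, mul_pow]
      ring
    have key : ∀ x ∈ t, ∀ᶠ s in nhdsWithin (0:ℝ) (Set.Ioi 0),
        ‖q₀ + s • v - f x‖ ^ 2 - ‖p - x‖ ^ 2 < m := by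
      intro x hx
      by_cases hxA : x ∈ A
      · have hIoo : ∀ᶠ s in nhdsWithin (0:ℝ) (Set.Ioi 0), s ∈ Set.Ioo (0:ℝ) 1 :=
          Ioo_mem_nhdsGT_of_mem ⟨le_refl 0, one_pos⟩
        filter_upwards [hIoo] with s hs
        rw [hexp]
        have h1 : ⟪q₀ - f x, v⟫ ≤ -δ := by
          have := hsep x hxA
          have h2' : q₀ - f x = -(f x - q₀) := by abel
          rw [h2', inner_neg_left, real_inner_comm]
          linarith
        have hact := hAact x hxA
        obtain ⟨hs0, hs1⟩ := hs
        nlinarith [mul_le_mul_of_nonneg_left h1 hs0.le, mul_pos hs0 hδpos,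
          mul_lt_mul_of_pos_left hs1 (mul_pos hs0 hδpos)]
      · have hgx : ‖q₀ - f x‖ ^ 2 - ‖p - x‖ ^ 2 < m := by
          have h1 := hle x hx
          have h2 : ‖q₀ - f x‖ ^ 2 - ‖p - x‖ ^ 2 ≠ m := fun h =>
            hxA (Finset.mem_filter.2 ⟨hx, h⟩)
          exact lt_of_le_of_ne h1 h2
        have hcont : Continuous fun s : ℝ => ‖q₀ + s • v - f x‖ ^ 2 - ‖p - x‖ ^ 2 := by
          fun_prop
        have htend : Filter.Tendsto (fun s : ℝ => ‖q₀ + s • v - f x‖ ^ 2 - ‖p - x‖ ^ 2)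
            (nhdsWithin 0 (Set.Ioi 0)) (nhds (‖q₀ - f x‖ ^ 2 - ‖p - x‖ ^ 2)) := by
          have := hcont.tendsto 0
          simp only [zero_smul, add_zero] at this
          exact this.mono_left nhdsWithin_le_nhds
        exact htend.eventually_lt_const hgx
    have hall := (Filter.eventually_all_finset t).2 key
    have hIoo : ∀ᶠ s in nhdsWithin (0:ℝ) (Set.Ioi 0), s ∈ Set.Ioo (0:ℝ) 1 :=
      Ioo_mem_nhdsGT_of_mem ⟨le_refl 0, one_pos⟩
    obtain ⟨s, hs1, hs2⟩ := (hall.and hIoo).exists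
    set q₁ : E := q₀ + s • v with hq₁def
    have hq₁K : q₁ ∈ K := by
      have : q₁ = (1 - s) • q₀ + s • zz := by
        rw [hq₁def, hvdef, smul_sub, sub_smul, one_smul]; abel
      rw [this]
      exact hKconv hq₀K (hKAK hzzKA) (by linarith [hs2.2]) (le_of_lt hs2.1) (by ring)
    have hΦq₁ : Φ q₁ < m := by
      rw [hΦdef]
      rw [Finset.sup'_lt_iff]
      intro x hx
      exact hs1 x hx
    have := hmin hq₁K
    simp only [← hmdef] at this
    exact absurd (lt_of_le_of_lt this hΦq₁) (lt_irrefl m)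

/-- One-point Kirszbraun–Valentine extension in the plane: given a 1-Lipschitz map `f`
on a nonempty set `S ⊆ ℝ²` and a point `p`, there is a point `p'` in the closure of the
convex hull of `f '' S` with `‖p' - f x‖ ≤ ‖p - x‖` for all `x ∈ S`. -/
theorem one_point_extension_plane
    (S : Set (EuclideanSpace ℝ (Fin 2))) (hS : S.Nonempty)
    (f : EuclideanSpace ℝ (Fin 2) → EuclideanSpace ℝ (Fin 2))
    (hf : ∀ x ∈ S, ∀ y ∈ S, ‖f x - f y‖ ≤ ‖x - y‖)
    (p : EuclideanSpace ℝ (Fin 2)) :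
    ∃ p' ∈ closure (convexHull ℝ (f '' S)), ∀ x ∈ S, ‖p' - f x‖ ≤ ‖p - x‖ := by
  classical
  obtain ⟨x₀, hx₀⟩ := hS
  set C := closure (convexHull ℝ (f '' S)) with hCdef
  set B : S → Set (EuclideanSpace ℝ (Fin 2)) :=
    fun x => Metric.closedBall (f x) ‖p - (x : EuclideanSpace ℝ (Fin 2))‖ with hBdef
  have hBclosed : ∀ x : S, IsClosed (B x) := fun x => Metric.isClosed_closedBall
  set K := C ∩ B ⟨x₀, hx₀⟩ with hKdef
  have hKcomp : IsCompact K := by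
    have hclosed : IsClosed K := isClosed_closure.inter (hBclosed _)
    have hbdd : Bornology.IsBounded K :=
      (Metric.isBounded_closedBall).subset (Set.inter_subset_right)
    exact Metric.isCompact_of_isClosed_isBounded hclosed hbdd
  by_contra hcon
  push_neg at hcon
  have hempty : K ∩ ⋂ x : S, B x = ∅ := by
    by_contra hne
    obtain ⟨q, ⟨hqC, _⟩, hqB⟩ := Set.nonempty_iff_ne_empty.2 hne
    obtain ⟨x, hxS, hxgt⟩ := hcon q hqC
    have : q ∈ B ⟨x, hxS⟩ := Set.mem_iInter.1 hqB ⟨x, hxS⟩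
    rw [hBdef, Metric.mem_closedBall, dist_eq_norm] at this
    exact absurd this (not_le.2 hxgt)
  obtain ⟨u, hu⟩ := hKcomp.elim_finite_subfamily_closed B hBclosed hempty
  set t : Finset (EuclideanSpace ℝ (Fin 2)) := insert x₀ (u.image Subtype.val) with htdef
  have htS : ∀ x ∈ t, x ∈ S := by
    intro x hx
    rcases Finset.mem_insert.1 hx with h | h
    · exact h ▸ hx₀
    · obtain ⟨y, _, rfl⟩ := Finset.mem_image.1 h
      exact y.2
  have htne : t.Nonempty := ⟨x₀, Finset.mem_insert_self _ _⟩
  obtain ⟨q, hqhull, hq⟩ := kirszbraun_finset t htne f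
    (fun x hx y hy => hf x (htS x hx) y (htS y hy)) p
  have hqC : q ∈ C :=
    subset_closure (convexHull_mono (Set.image_mono (f := f) (fun x hx => htS x hx)) hqhull)
  have hqK : q ∈ K := by
    refine ⟨hqC, ?_⟩
    rw [hBdef, Metric.mem_closedBall, dist_eq_norm]
    exact hq x₀ (Finset.mem_insert_self _ _)
  have hqB : q ∈ ⋂ x ∈ u, B x := by
    refine Set.mem_iInter₂.2 fun x hx => ?_
    rw [Metric.mem_closedBall, dist_eq_norm]
    exact hq x (Finset.mem_insert_of_mem (Finset.mem_image_of_mem _ hx))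
  rw [Set.eq_empty_iff_forall_notMem] at hu
  exact hu q ⟨hqK, hqB⟩
end

section
/- Fix six points x₁, x₂, x₃, x₁', x₂', x₃' in the Euclidean plane ℝ² such that ‖xᵢ' − xⱼ'‖ ≤ ‖xᵢ − xⱼ‖ for every i, j ∈ {1,2,3}. Then for any point x₄ ∈ ℝ² there is a point x₄' contained in the convex hull of {x₁', x₂', x₃'} (the filled triangle Δ(x₁', x₂', x₃')) such that ‖x₄' − xᵢ'‖ ≤ ‖x₄ − xᵢ‖ for every i ∈ {1,2,3}. -/
open Filter Set Finset InnerProductSpace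

set_option maxHeartbeats 2000000

private lemma vtl_norm_sq_sum_smul {ι : Type} (t : Finset ι) (w : ι → ℝ)
    (q : ι → EuclideanSpace ℝ (Fin 2)) :
    ‖∑ j ∈ t, w j • q j‖ ^ 2 = ∑ j ∈ t, ∑ k ∈ t, w j * w k * ⟪q j, q k⟫_ℝ := by
  rw [← real_inner_self_eq_norm_sq, sum_inner]
  refine Finset.sum_congr rfl fun j _ => ?_
  rw [inner_sum]
  refine Finset.sum_congr rfl fun k _ => ?_
  rw [real_inner_smul_left, real_inner_smul_right]; ring

private lemma vtl_sq_le (a b : ℝ) (ha : 0 ≤ a) (hb : a ^ 2 ≤ b ^ 2) (hb' : 0 ≤ b) : a ≤ b := by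
  nlinarith

/-- Valentine's triangle lemma (Lemma 3.6 of the paper): if the three mutual distances
of `x₁', x₂', x₃'` do not exceed those of `x₁, x₂, x₃`, then for any `x₄` there is a
point `x₄'` of the filled triangle `Δ(x₁', x₂', x₃')` with `‖x₄' - xᵢ'‖ ≤ ‖x₄ - xᵢ‖`. -/
theorem valentine_triangle_lemma
    (x₁ x₂ x₃ x₁' x₂' x₃' : EuclideanSpace ℝ (Fin 2))
    (h12 : ‖x₁' - x₂'‖ ≤ ‖x₁ - x₂‖)
    (h13 : ‖x₁' - x₃'‖ ≤ ‖x₁ - x₃‖)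
    (h23 : ‖x₂' - x₃'‖ ≤ ‖x₂ - x₃‖)
    (x₄ : EuclideanSpace ℝ (Fin 2)) :
    ∃ x₄' ∈ convexHull ℝ ({x₁', x₂', x₃'} : Set (EuclideanSpace ℝ (Fin 2))),
      ‖x₄' - x₁'‖ ≤ ‖x₄ - x₁‖ ∧ ‖x₄' - x₂'‖ ≤ ‖x₄ - x₂‖ ∧ ‖x₄' - x₃'‖ ≤ ‖x₄ - x₃‖ := by
  classical
  set p : Fin 3 → EuclideanSpace ℝ (Fin 2) := ![x₁, x₂, x₃] with hp
  set q : Fin 3 → EuclideanSpace ℝ (Fin 2) := ![x₁', x₂', x₃'] with hq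
  have hsymm : ∀ {y z y' z' : EuclideanSpace ℝ (Fin 2)}, ‖y' - z'‖ ≤ ‖y - z‖ → ‖z' - y'‖ ≤ ‖z - y‖ := by
    intro y z y' z' h
    rw [norm_sub_rev z' y', norm_sub_rev z y]
    exact h
  have hdiag : ∀ y z : EuclideanSpace ℝ (Fin 2), ‖y - y‖ ≤ ‖z - z‖ := by simp
  have hpq : ∀ a b : Fin 3, ‖q a - q b‖ ≤ ‖p a - p b‖ := by
    intro a b
    fin_cases a <;> fin_cases b <;>
      simp only [hp, hq, Fin.zero_eta, Fin.mk_one, Fin.reduceFinMk, Fin.isValue,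
        Matrix.cons_val_zero, Matrix.cons_val_one, Matrix.cons_val_two,
        Nat.succ_eq_add_one, Nat.reduceAdd, Matrix.tail_cons, Matrix.head_cons]
    · exact hdiag _ _
    · exact h12
    · exact h13
    · exact hsymm h12
    · exact hdiag _ _
    · exact h23
    · exact hsymm h13
    · exact hsymm h23
    · exact hdiag _ _
  set r : Fin 3 → ℝ := fun i => ‖x₄ - p i‖ with hr
  set g : Fin 3 → EuclideanSpace ℝ (Fin 2) → ℝ := fun i y => ‖y - q i‖ ^ 2 - r i ^ 2 with hg
  set F : EuclideanSpace ℝ (Fin 2) → ℝ := fun y => max (max (g 0 y) (g 1 y)) (g 2 y) with hF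
  have hgcont : ∀ i, Continuous (g i) := by
    intro i
    exact ((continuous_id.sub continuous_const).norm.pow 2).sub continuous_const
  have hFcont : Continuous F := ((hgcont 0).max (hgcont 1)).max (hgcont 2)
  have hgle : ∀ (y : EuclideanSpace ℝ (Fin 2)) (i : Fin 3), g i y ≤ F y := by
    intro y i
    fin_cases i
    · exact le_trans (le_max_left _ _) (le_max_left _ _)
    · exact le_trans (le_max_right _ _) (le_max_left _ _)
    · exact le_max_right _ _
  have hFex : ∀ y : EuclideanSpace ℝ (Fin 2), ∃ i, F y = g i y := by
    intro y
    rcases max_choice (max (g 0 y) (g 1 y)) (g 2 y) with h | h <;> rw [hF] <;> simp only [h]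
    · rcases max_choice (g 0 y) (g 1 y) with h' | h' <;> rw [h']
      exacts [⟨0, rfl⟩, ⟨1, rfl⟩]
    · exact ⟨2, rfl⟩
  have hcoer : Tendsto F (cocompact (EuclideanSpace ℝ (Fin 2))) atTop := by
    have h1 : Tendsto (fun y : EuclideanSpace ℝ (Fin 2) => ‖y - q 0‖) (cocompact (EuclideanSpace ℝ (Fin 2))) atTop := by
      refine tendsto_atTop_mono (fun y => ?_)
        (tendsto_atTop_add_const_right _ (-‖q 0‖) tendsto_norm_cocompact_atTop)
      have := norm_sub_norm_le y (q 0)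
      linarith
    have h2 : Tendsto (fun y : EuclideanSpace ℝ (Fin 2) => ‖y - q 0‖ ^ 2) (cocompact (EuclideanSpace ℝ (Fin 2))) atTop :=
      (tendsto_pow_atTop two_ne_zero).comp h1
    refine tendsto_atTop_mono (fun y => ?_)
      (tendsto_atTop_add_const_right _ (-(r 0 ^ 2)) h2)
    have := hgle y 0
    simp only [hg] at this ⊢
    linarith
  obtain ⟨y₀, hy₀⟩ := hFcont.exists_forall_le hcoer
  set m : ℝ := F y₀ with hm
  have hqT : ∀ i : Fin 3, q i ∈ convexHull ℝ ({x₁', x₂', x₃'} : Set (EuclideanSpace ℝ (Fin 2))) := by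
    intro i
    apply subset_convexHull
    fin_cases i <;> simp [hq]
  by_cases hm0 : m ≤ 0
  · -- `y₀` lies in all three balls; project it onto the triangle.
    have hball : ∀ i, ‖y₀ - q i‖ ≤ r i := by
      intro i
      have h1 : g i y₀ ≤ 0 := le_trans (hgle y₀ i) hm0
      simp only [hg] at h1
      exact vtl_sq_le _ _ (norm_nonneg _) (by linarith) (norm_nonneg _)
    set T : Set (EuclideanSpace ℝ (Fin 2)) := convexHull ℝ ({x₁', x₂', x₃'} : Set (EuclideanSpace ℝ (Fin 2))) with hT
    have hTconv : Convex ℝ T := convex_convexHull _ _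
    have hTne : T.Nonempty := ⟨q 0, hqT 0⟩
    have hTclosed : IsClosed T := by
      refine (Set.Finite.isCompact_convexHull (𝕜 := ℝ) ?_).isClosed
      exact ((Set.finite_singleton _).insert _).insert _
    obtain ⟨v, hvT, hvmin⟩ := exists_norm_eq_iInf_of_complete_convex hTne
      hTclosed.isComplete hTconv y₀
    have hproj := (norm_eq_iInf_iff_real_inner_le_zero hTconv hvT).1 hvmin
    have hclaim : ∀ i, ‖v - q i‖ ≤ r i := by
      intro i
      have h2 : ⟪y₀ - v, q i - v⟫_ℝ ≤ 0 := hproj (q i) (hqT i)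
      have hexp := norm_add_sq_real (y₀ - v) (v - q i)
      rw [sub_add_sub_cancel] at hexp
      have hin : ⟪y₀ - v, v - q i⟫_ℝ = -⟪y₀ - v, q i - v⟫_ℝ := by
        rw [← inner_neg_right, neg_sub]
      have hb := hball i
      refine vtl_sq_le _ _ (norm_nonneg _) ?_ (le_trans (norm_nonneg _) hb)
      nlinarith [norm_nonneg (y₀ - v), norm_nonneg (y₀ - q i), sq_nonneg ‖y₀ - v‖]
    have c0 := hclaim 0
    have c1 := hclaim 1
    have c2 := hclaim 2
    simp only [hq, hr, hp, Matrix.cons_val_zero, Matrix.cons_val_one, Matrix.head_cons,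
      Matrix.cons_val_two, Matrix.tail_cons] at c0 c1 c2
    exact ⟨v, hvT, c0, c1, c2⟩
  · exfalso
    push_neg at hm0
    set A : Finset (Fin 3) := Finset.univ.filter (fun i => g i y₀ = m) with hA
    have hAmem : ∀ i : Fin 3, i ∈ A ↔ g i y₀ = m := by intro i; simp [hA]
    set v : Fin 3 → EuclideanSpace ℝ (Fin 2) := fun i => y₀ - q i with hv
    set u : Fin 3 → EuclideanSpace ℝ (Fin 2) := fun i => x₄ - p i with hu
    have hkey : ∀ a ∈ A, ∀ b ∈ A, ⟪u a, u b⟫_ℝ + m ≤ ⟪v a, v b⟫_ℝ := by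
      intro a ha b hb
      have hga : ‖y₀ - q a‖ ^ 2 = m + r a ^ 2 := by
        have := (hAmem a).1 ha; simp only [hg] at this; linarith
      have hgb : ‖y₀ - q b‖ ^ 2 = m + r b ^ 2 := by
        have := (hAmem b).1 hb; simp only [hg] at this; linarith
      have hab : ‖q b - q a‖ ^ 2 ≤ ‖p b - p a‖ ^ 2 := by
        have := hpq b a
        nlinarith [norm_nonneg (q b - q a), norm_nonneg (p b - p a)]
      have e1 : v a - v b = q b - q a := by simp only [hv]; abel
      have e2 : u a - u b = p b - p a := by simp only [hu]; abel
      have d1 := norm_sub_sq_real (v a) (v b)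
      have d2 := norm_sub_sq_real (u a) (u b)
      rw [e1] at d1; rw [e2] at d2
      have hva : ‖v a‖ ^ 2 = m + r a ^ 2 := hga
      have hvb : ‖v b‖ ^ 2 = m + r b ^ 2 := hgb
      have hua : ‖u a‖ ^ 2 = r a ^ 2 := by rw [hu, hr]
      have hub : ‖u b‖ ^ 2 = r b ^ 2 := by rw [hu, hr]
      linarith
    have hmem : (0 : EuclideanSpace ℝ (Fin 2)) ∈ convexHull ℝ (v '' (A : Set (Fin 3))) := by
      by_contra hout
      have hclosed : IsClosed (convexHull ℝ (v '' (A : Set (Fin 3)))) :=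
        (Set.Finite.isCompact_convexHull (𝕜 := ℝ) (A.finite_toSet.image v)).isClosed
      obtain ⟨f, c, hfc, hc0⟩ := geometric_hahn_banach_closed_point
        (convex_convexHull ℝ _) hclosed hout
      rw [map_zero] at hc0
      set d : EuclideanSpace ℝ (Fin 2) := (InnerProductSpace.toDual ℝ (EuclideanSpace ℝ (Fin 2))).symm f with hd
      have hdf : ∀ x : EuclideanSpace ℝ (Fin 2), ⟪d, x⟫_ℝ = f x := fun x => InnerProductSpace.toDual_symm_apply
      have hdneg : ∀ i ∈ A, ⟪d, v i⟫_ℝ < c := by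
        intro i hi
        rw [hdf]
        exact hfc _ (subset_convexHull ℝ _ (Set.mem_image_of_mem v (Finset.mem_coe.2 hi)))
      have hexpand : ∀ (t : ℝ) (i : Fin 3),
          g i (y₀ + t • d) = g i y₀ + t * (2 * ⟪d, v i⟫_ℝ) + t ^ 2 * ‖d‖ ^ 2 := by
        intro t i
        have h1 : y₀ + t • d - q i = v i + t • d := by simp only [hv]; abel
        simp only [hg]
        rw [h1, norm_add_sq_real, real_inner_smul_right, norm_smul, Real.norm_eq_abs,
          mul_pow, sq_abs, real_inner_comm]
        ring
      have hev : ∀ i : Fin 3, ∀ᶠ t in nhdsWithin (0 : ℝ) (Set.Ioi 0),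
          g i (y₀ + t • d) < m := by
        intro i
        by_cases hi : i ∈ A
        · have hcneg : ⟪d, v i⟫_ℝ < c := hdneg i hi
          have hnum : (0 : ℝ) < -(2 * ⟪d, v i⟫_ℝ) := by linarith
          have hden : (0 : ℝ) < ‖d‖ ^ 2 + 1 := by positivity
          have hlt : (0 : ℝ) < -(2 * ⟪d, v i⟫_ℝ) / (‖d‖ ^ 2 + 1) := div_pos hnum hden
          filter_upwards [Ioo_mem_nhdsGT_of_mem (Set.mem_Ico.2 ⟨le_refl (0:ℝ), hlt⟩)] with t ht
          obtain ⟨ht0, ht1⟩ := ht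
          rw [hexpand]
          have hgi : g i y₀ = m := (hAmem i).1 hi
          have h2 : t * (‖d‖ ^ 2 + 1) < -(2 * ⟪d, v i⟫_ℝ) := (lt_div_iff₀ hden).1 ht1
          nlinarith
        · have hgi : g i y₀ < m :=
            lt_of_le_of_ne (hgle y₀ i) (fun h => hi ((hAmem i).2 h))
          have hcont : ContinuousAt (fun t : ℝ => g i (y₀ + t • d)) 0 := by
            exact ((hgcont i).comp
              (continuous_const.add (continuous_id.smul continuous_const))).continuousAt
          have h00 : (fun t : ℝ => g i (y₀ + t • d)) 0 < m := by
            simp only [zero_smul, add_zero]; exact hgi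
          exact (hcont.eventually_lt continuousAt_const h00).filter_mono nhdsWithin_le_nhds
      obtain ⟨t, ⟨⟨hg0, hg1⟩, hg2⟩⟩ := (((hev 0).and (hev 1)).and (hev 2)).exists
      have hFlt : F (y₀ + t • d) < m := max_lt (max_lt hg0 hg1) hg2
      exact absurd (hy₀ (y₀ + t • d)) (not_le.2 hFlt)
    rw [_root_.convexHull_eq] at hmem
    obtain ⟨ι, tt, w, z, hw0, hw1, hzs, hcm⟩ := hmem
    have hchoice : ∀ j : ι, ∃ a : Fin 3, j ∈ tt → a ∈ A ∧ v a = z j := by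
      intro j
      by_cases hj : j ∈ tt
      · obtain ⟨a, ha, hae⟩ := hzs j hj
        exact ⟨a, fun _ => ⟨Finset.mem_coe.1 ha, hae⟩⟩
      · exact ⟨0, fun h => absurd h hj⟩
    choose I hI using hchoice
    have hsum : ∑ j ∈ tt, w j • v (I j) = 0 := by
      rw [← hcm, Finset.centerMass_eq_of_sum_1 _ _ hw1]
      exact Finset.sum_congr rfl fun j hj => by rw [(hI j hj).2]
    have h0 : (0 : ℝ) = ∑ j ∈ tt, ∑ k ∈ tt, w j * w k * ⟪v (I j), v (I k)⟫_ℝ := by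
      rw [← vtl_norm_sq_sum_smul tt w (fun j => v (I j)), hsum, norm_zero]
      norm_num
    have hlow : ∑ j ∈ tt, ∑ k ∈ tt, w j * w k * (⟪u (I j), u (I k)⟫_ℝ + m)
        ≤ ∑ j ∈ tt, ∑ k ∈ tt, w j * w k * ⟪v (I j), v (I k)⟫_ℝ := by
      refine Finset.sum_le_sum fun j hj => Finset.sum_le_sum fun k hk => ?_
      exact mul_le_mul_of_nonneg_left (hkey (I j) (hI j hj).1 (I k) (hI k hk).1)
        (mul_nonneg (hw0 j hj) (hw0 k hk))
    have hsplit : ∑ j ∈ tt, ∑ k ∈ tt, w j * w k * (⟪u (I j), u (I k)⟫_ℝ + m)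
        = (∑ j ∈ tt, ∑ k ∈ tt, w j * w k * ⟪u (I j), u (I k)⟫_ℝ) + m := by
      simp only [mul_add, Finset.sum_add_distrib]
      congr 1
      simp only [mul_assoc]
      rw [← Finset.sum_mul_sum, hw1, one_mul, ← Finset.sum_mul, hw1, one_mul]
    have hSu : 0 ≤ ∑ j ∈ tt, ∑ k ∈ tt, w j * w k * ⟪u (I j), u (I k)⟫_ℝ := by
      rw [← vtl_norm_sq_sum_smul tt w (fun j => u (I j))]
      positivity
    linarith
end

section
/- In the Euclidean plane ℝ² let a = (0,0), b = (1,0), c = (1/2, √3/2) and c' = (1/2, √3), and set T₁ = convexHull{a, b, c} (an equilateral triangle with sides of length 1) and T₂ = convexHull{a, b, c'} (an isosceles triangle with base of length 1 and height √3). If K ≥ 0 and f : ℝ² → ℝ² satisfies ‖f(x) − f(y)‖ ≤ K‖x − y‖ for all x, y ∈ T₁, maps T₁ into T₂, sends the base segment [a, b] into the segment [a, b], and satisfies f(c) = c', then K ≥ 2. In particular K strictly exceeds √13/2, the maximal ratio of lengths of corresponding sides of T₁ and T₂. -/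
noncomputable section

/-- The vertices of the equilateral triangle `T₁` and of the isosceles triangle `T₂`. -/
def ptA : EuclideanSpace ℝ (Fin 2) := !₂[0, 0]
def ptB : EuclideanSpace ℝ (Fin 2) := !₂[1, 0]
def ptC : EuclideanSpace ℝ (Fin 2) := !₂[1/2, Real.sqrt 3 / 2]
def ptC' : EuclideanSpace ℝ (Fin 2) := !₂[1/2, Real.sqrt 3]

/-- The equilateral triangle with vertices `(0,0)`, `(1,0)`, `(1/2, √3/2)`. -/
def T₁ : Set (EuclideanSpace ℝ (Fin 2)) := convexHull ℝ {ptA, ptB, ptC}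

/-- The isosceles triangle with vertices `(0,0)`, `(1,0)`, `(1/2, √3)`. -/
def T₂ : Set (EuclideanSpace ℝ (Fin 2)) := convexHull ℝ {ptA, ptB, ptC'}

/-- The Example of Section 2.4 of the paper: any `K`-Lipschitz map from the equilateral
triangle `T₁` to the isosceles triangle `T₂` sending the base segment into the base
segment and the apex to the apex must have `K ≥ 2 > √13 / 2`. -/
theorem lipschitz_triangle_counterexample
    (K : ℝ) (hK : 0 ≤ K)
    (f : EuclideanSpace ℝ (Fin 2) → EuclideanSpace ℝ (Fin 2))
    (hlip : ∀ x ∈ T₁, ∀ y ∈ T₁, ‖f x - f y‖ ≤ K * ‖x - y‖)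
    (hmap : ∀ x ∈ T₁, f x ∈ T₂)
    (hbase : ∀ x ∈ segment ℝ ptA ptB, f x ∈ segment ℝ ptA ptB)
    (hapex : f ptC = ptC') :
    2 ≤ K ∧ Real.sqrt 13 / 2 < K := by
  set m : EuclideanSpace ℝ (Fin 2) := !₂[1/2, 0] with hm
  have hmseg : m ∈ segment ℝ ptA ptB := by
    refine ⟨1/2, 1/2, by norm_num, by norm_num, by norm_num, ?_⟩
    ext i
    fin_cases i <;> simp [ptA, ptB, hm]
  have hA : ptA ∈ T₁ := subset_convexHull ℝ _ (by left; rfl)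
  have hB : ptB ∈ T₁ := subset_convexHull ℝ _ (by right; left; rfl)
  have hcT : ptC ∈ T₁ := subset_convexHull ℝ _ (by right; right; rfl)
  have hmT : m ∈ T₁ :=
    (convex_convexHull ℝ ({ptA, ptB, ptC} : Set _)).segment_subset hA hB hmseg
  obtain ⟨u, v, hu, hv, huv, heq⟩ := hbase m hmseg
  have hfm0 : f m 0 = v := by
    have := congrArg (fun p => p 0) heq
    simpa [ptA, ptB] using this.symm
  have hfm1 : f m 1 = 0 := by
    have := congrArg (fun p => p 1) heq
    simpa [ptA, ptB] using this.symm
  have h3 : (0:ℝ) ≤ 3 := by norm_num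
  have hsqrt3 : Real.sqrt 3 ≤ ‖f ptC - f m‖ := by
    rw [hapex]
    have : ‖ptC' - f m‖ = Real.sqrt ((1/2 - v)^2 + Real.sqrt 3 ^ 2) := by
      rw [EuclideanSpace.norm_eq, Fin.sum_univ_two]
      simp [ptC', hfm0, hfm1]
    rw [this]
    apply Real.sqrt_le_sqrt
    nlinarith [sq_nonneg (1/2 - v), Real.sq_sqrt h3]
  have hnorm : ‖ptC - m‖ = Real.sqrt 3 / 2 := by
    have : ‖ptC - m‖ = Real.sqrt ((Real.sqrt 3 / 2)^2) := by
      rw [EuclideanSpace.norm_eq, Fin.sum_univ_two]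
      simp [ptC, hm]
      ring_nf
      rw [sq_abs]
    rw [this, Real.sqrt_sq (by positivity)]
  have key := hlip ptC hcT m hmT
  rw [hnorm] at key
  have hs3 : 0 < Real.sqrt 3 := Real.sqrt_pos.mpr (by norm_num)
  have h2K : 2 ≤ K := by nlinarith
  refine ⟨h2K, lt_of_lt_of_le ?_ h2K⟩
  have : Real.sqrt 13 < 4 := by
    nlinarith [Real.sq_sqrt (show (0:ℝ) ≤ 13 by norm_num), Real.sqrt_nonneg 13]
  linarith

end
end

section
/- Let x₁, x₂, x₃ and x₁', x₂', x₃' be points of the Euclidean plane ℝ² such that ‖xᵢ' − xⱼ'‖ ≤ ‖xᵢ − xⱼ‖ for all i, j ∈ {1,2,3}, and set Δ = convexHull{x₁, x₂, x₃} and Δ' = convexHull{x₁', x₂', x₃'}. Then there exists a map f : ℝ² → ℝ² which is 1-Lipschitz on Δ, maps Δ into Δ', and satisfies f(xᵢ) = xᵢ' for i = 1, 2, 3. -/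
open Finset

noncomputable abbrev E2 := EuclideanSpace ℝ (Fin 2)

lemma double_sum_identity {β : Type*} (B : Finset β) (c : β → ℝ) (u : β → E2)
    (h1 : ∑ b ∈ B, c b = 1) :
    ∑ b ∈ B, ∑ b' ∈ B, c b * c b' * ‖u b - u b'‖ ^ 2
      = 2 * (∑ b ∈ B, c b * ‖u b‖ ^ 2) - 2 * ‖∑ b ∈ B, c b • u b‖ ^ 2 := by
  have hinner : ∑ b ∈ B, ∑ b' ∈ B, c b * c b' * (inner ℝ (u b) (u b') : ℝ)
      = ‖∑ b ∈ B, c b • u b‖ ^ 2 := by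
    rw [← real_inner_self_eq_norm_sq, sum_inner]
    refine Finset.sum_congr rfl fun b hb => ?_
    rw [real_inner_smul_left, inner_sum, Finset.mul_sum]
    refine Finset.sum_congr rfl fun b' hb' => ?_
    rw [real_inner_smul_right]; ring
  have expand : ∀ b b', ‖u b - u b'‖ ^ 2
      = ‖u b‖ ^ 2 - 2 * (inner ℝ (u b) (u b') : ℝ) + ‖u b'‖ ^ 2 := fun b b' =>
    norm_sub_sq_real (u b) (u b')
  calc ∑ b ∈ B, ∑ b' ∈ B, c b * c b' * ‖u b - u b'‖ ^ 2
      = ∑ b ∈ B, ∑ b' ∈ B, (c b * c b' * ‖u b‖ ^ 2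
          - 2 * (c b * c b' * (inner ℝ (u b) (u b') : ℝ)) + c b * c b' * ‖u b'‖ ^ 2) := by
        refine Finset.sum_congr rfl fun b _ => Finset.sum_congr rfl fun b' _ => ?_
        rw [expand]; ring
    _ = 2 * (∑ b ∈ B, c b * ‖u b‖ ^ 2) - 2 * ‖∑ b ∈ B, c b • u b‖ ^ 2 := by
        rw [← hinner]
        simp only [Finset.sum_add_distrib, Finset.sum_sub_distrib, ← Finset.mul_sum,
          ← Finset.sum_mul]
        rw [Finset.sum_comm (f := fun b b' => c b * c b' * ‖u b'‖ ^ 2)]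
        simp only [← Finset.sum_mul, ← Finset.mul_sum]
        ring_nf
        rw [h1]
        simp only [one_mul]
        ring

lemma kirszbraun_onepoint {n : ℕ} (p q : Fin n → E2) (x : E2) (S' : Set E2)
    (hconv : Convex ℝ S') (hcomp : IsCompact S') (hne : S'.Nonempty)
    (hq : ∀ i, q i ∈ S') (hlip : ∀ i j, ‖q i - q j‖ ≤ ‖p i - p j‖) :
    ∃ y ∈ S', ∀ i, ‖y - q i‖ ≤ ‖x - p i‖ := by
  classical
  rcases isEmpty_or_nonempty (Fin n) with hemp | hfn
  · exact ⟨hne.choose, hne.choose_spec, fun i => (IsEmpty.false i).elim⟩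
  have hBne : (Finset.univ : Finset (Fin n)).Nonempty := Finset.univ_nonempty
  set φ : E2 → ℝ := fun y => Finset.univ.sup' hBne (fun i => ‖y - q i‖ ^ 2 - ‖x - p i‖ ^ 2)
    with hφdef
  have hφcont : Continuous φ :=
    Continuous.finset_sup'_apply hBne (fun i _ => by fun_prop)
  have hφle : ∀ (y : E2) (i : Fin n), ‖y - q i‖ ^ 2 - ‖x - p i‖ ^ 2 ≤ φ y := fun y i =>
    Finset.le_sup' (fun i => ‖y - q i‖ ^ 2 - ‖x - p i‖ ^ 2) (Finset.mem_univ i)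
  obtain ⟨y₀, hy₀S, hmin⟩ := hcomp.exists_isMinOn hne hφcont.continuousOn
  by_cases hφ0 : φ y₀ ≤ 0
  · refine ⟨y₀, hy₀S, fun i => ?_⟩
    have h1 := hφle y₀ i
    have h2 : ‖y₀ - q i‖ ^ 2 ≤ ‖x - p i‖ ^ 2 := by linarith
    have := Real.sqrt_le_sqrt h2
    rwa [Real.sqrt_sq (norm_nonneg _), Real.sqrt_sq (norm_nonneg _)] at this
  push_neg at hφ0
  exfalso
  -- active set
  set A : Finset (Fin n) := Finset.univ.filter
    (fun i => φ y₀ ≤ ‖y₀ - q i‖ ^ 2 - ‖x - p i‖ ^ 2) with hAdef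
  have hAne : A.Nonempty := by
    obtain ⟨i, _, hi⟩ := Finset.exists_mem_eq_sup' hBne
      (fun i => ‖y₀ - q i‖ ^ 2 - ‖x - p i‖ ^ 2)
    exact ⟨i, Finset.mem_filter.2 ⟨Finset.mem_univ i, le_of_eq hi⟩⟩
  have hAval : ∀ i ∈ A, ‖y₀ - q i‖ ^ 2 - ‖x - p i‖ ^ 2 = φ y₀ := by
    intro i hi
    exact le_antisymm (hφle y₀ i) (Finset.mem_filter.1 hi).2
  set B : Finset E2 := A.image q with hBdef
  have hBne' : B.Nonempty := hAne.image q
  set K : Set E2 := convexHull ℝ (B : Set E2) with hKdef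
  have hKS : K ⊆ S' := convexHull_min (by
    intro b hb
    obtain ⟨i, _, rfl⟩ := Finset.mem_image.1 (Finset.mem_coe.1 hb)
    exact hq i) hconv
  have hKconv : Convex ℝ K := convex_convexHull ℝ _
  have hKcomp : IsCompact K := (B : Set E2).toFinite.isCompact_convexHull ℝ
  have hKne : K.Nonempty := hBne'.to_set.mono (subset_convexHull ℝ _)
  -- representative map: for each b ∈ B, an active index with q i = b
  have hrep : ∀ b ∈ B, ∃ i ∈ A, q i = b := fun b hb => by
    obtain ⟨i, hi, rfl⟩ := Finset.mem_image.1 hb; exact ⟨i, hi, rfl⟩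
  by_cases hy₀K : y₀ ∈ K
  · -- case 1: y₀ in hull of active points
    rw [hKdef, Finset.convexHull_eq] at hy₀K
    obtain ⟨w, hw0, hw1, hwc⟩ := hy₀K
    have hwc' : ∑ b ∈ B, w b • b = y₀ := by
      rw [← hwc, Finset.centerMass_eq_of_sum_1 _ _ hw1]; rfl
    choose r hrA hrq using hrep
    have key1 : ∀ (b : E2) (hb : b ∈ B), ‖y₀ - b‖ ^ 2 - ‖x - p (r b hb)‖ ^ 2 = φ y₀ := by
      intro b hb
      have := hAval _ (hrA b hb)
      rwa [hrq b hb] at this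
    have hsum1 : ∑ b ∈ B.attach, w b.1 = 1 := by
      rw [Finset.sum_attach]; exact hw1
    have hsum2 : ∑ b ∈ B.attach, w b.1 • (b.1 - y₀) = (0 : E2) := by
      simp only [smul_sub]
      rw [Finset.sum_sub_distrib, ← Finset.sum_smul, hsum1,
        Finset.sum_attach B (fun b => w b • b), hwc', one_smul, sub_self]
    have id1 := double_sum_identity B.attach (fun b => w b.1) (fun b => b.1 - y₀) hsum1
    have id2 := double_sum_identity B.attach (fun b => w b.1)
      (fun b => p (r b.1 b.2) - x) hsum1
    rw [hsum2, norm_zero] at id1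
    have mono : ∑ b ∈ B.attach, ∑ b' ∈ B.attach, w b.1 * w b'.1 * ‖(b.1 - y₀) - (b'.1 - y₀)‖ ^ 2
        ≤ ∑ b ∈ B.attach, ∑ b' ∈ B.attach,
          w b.1 * w b'.1 * ‖(p (r b.1 b.2) - x) - (p (r b'.1 b'.2) - x)‖ ^ 2 := by
      refine Finset.sum_le_sum fun b _ => Finset.sum_le_sum fun b' _ => ?_
      have hw : 0 ≤ w b.1 * w b'.1 := mul_nonneg (hw0 _ b.2) (hw0 _ b'.2)
      refine mul_le_mul_of_nonneg_left ?_ hw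
      have : ‖b.1 - b'.1‖ ≤ ‖p (r b.1 b.2) - p (r b'.1 b'.2)‖ := by
        have := hlip (r b.1 b.2) (r b'.1 b'.2)
        rwa [hrq, hrq] at this
      calc ‖(b.1 - y₀) - (b'.1 - y₀)‖ ^ 2 = ‖b.1 - b'.1‖ ^ 2 := by
            congr 1; congr 1; abel
        _ ≤ ‖p (r b.1 b.2) - p (r b'.1 b'.2)‖ ^ 2 :=
            pow_le_pow_left₀ (norm_nonneg _) this 2
        _ = ‖(p (r b.1 b.2) - x) - (p (r b'.1 b'.2) - x)‖ ^ 2 := by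
            congr 1; congr 1; abel
    rw [id1, id2] at mono
    have hk : ∑ b ∈ B.attach, w b.1 * ‖b.1 - y₀‖ ^ 2
        ≤ ∑ b ∈ B.attach, w b.1 * ‖p (r b.1 b.2) - x‖ ^ 2 := by
      nlinarith [sq_nonneg ‖∑ b ∈ B.attach, w b.1 • (p (r b.1 b.2) - x)‖]
    have heval : ∑ b ∈ B.attach, w b.1 * ‖p (r b.1 b.2) - x‖ ^ 2
        = ∑ b ∈ B.attach, w b.1 * ‖b.1 - y₀‖ ^ 2 - φ y₀ := by
      have : ∀ b : {b // b ∈ B}, w b.1 * ‖p (r b.1 b.2) - x‖ ^ 2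
          = w b.1 * ‖b.1 - y₀‖ ^ 2 - w b.1 * φ y₀ := by
        intro b
        have hk1 := key1 b.1 b.2
        have e1 : ‖p (r b.1 b.2) - x‖ = ‖x - p (r b.1 b.2)‖ := norm_sub_rev _ _
        have e2 : ‖b.1 - y₀‖ = ‖y₀ - b.1‖ := norm_sub_rev _ _
        rw [e1, e2]
        linear_combination (-(w b.1)) * hk1
      rw [Finset.sum_congr rfl (fun b _ => this b), Finset.sum_sub_distrib,
        ← Finset.sum_mul, hsum1, one_mul]
    rw [heval] at hk
    linarith
  · -- case 2: y₀ ∉ K; move toward the projection of y₀ on K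
    obtain ⟨z, hzK, hzmin⟩ := hKcomp.exists_isMinOn hKne
      (continuous_const.dist continuous_id).continuousOn (f := fun b => dist y₀ b)
    have hproj : ‖y₀ - z‖ = ⨅ b : K, ‖y₀ - b‖ := by
      haveI : Nonempty K := hKne.to_subtype
      apply le_antisymm
      · refine le_ciInf fun b => ?_
        have := hzmin b.2
        simpa [dist_eq_norm] using this
      · exact ciInf_le ⟨0, fun _ ⟨b, hb⟩ => hb ▸ norm_nonneg _⟩ (⟨z, hzK⟩ : K)
    have hang : ∀ b ∈ K, (inner ℝ (y₀ - z) (b - z) : ℝ) ≤ 0 :=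
      (norm_eq_iInf_iff_real_inner_le_zero hKconv hzK).1 hproj
    have hzy : y₀ ≠ z := fun h => hy₀K (h ▸ hzK)
    have hδ : (0:ℝ) < ‖y₀ - z‖ ^ 2 := by
      have h : y₀ - z ≠ 0 := sub_ne_zero.2 hzy
      exact pow_pos (norm_pos_iff.mpr h) 2
    set δ : ℝ := ‖y₀ - z‖ ^ 2 with hδdef
    -- inner product bound for active indices
    have hact : ∀ i ∈ A, δ ≤ (inner ℝ (y₀ - z) (y₀ - q i) : ℝ) := by
      intro i hi
      have hqK : q i ∈ K := subset_convexHull ℝ _ (Finset.mem_coe.2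
        (Finset.mem_image.2 ⟨i, hi, rfl⟩))
      have h1 := hang _ hqK
      have : (inner ℝ (y₀ - z) (y₀ - q i) : ℝ)
          = ‖y₀ - z‖ ^ 2 - (inner ℝ (y₀ - z) (q i - z) : ℝ) := by
        rw [← real_inner_self_eq_norm_sq, ← inner_sub_right]
        congr 1
        abel
      rw [this]
      linarith
    -- the perturbed point
    set pt : ℝ → E2 := fun t => y₀ + t • (z - y₀) with hptdef
    have hψ : ∀ (i : Fin n) (t : ℝ), ‖pt t - q i‖ ^ 2
        = ‖y₀ - q i‖ ^ 2 - 2 * t * (inner ℝ (y₀ - z) (y₀ - q i) : ℝ) + t ^ 2 * δ := by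
      intro i t
      have : pt t - q i = (y₀ - q i) + t • (z - y₀) := by rw [hptdef, add_sub_right_comm]
      rw [this, norm_add_sq_real, real_inner_smul_right, norm_smul]
      have : (inner ℝ (y₀ - q i) (z - y₀) : ℝ) = -(inner ℝ (y₀ - z) (y₀ - q i) : ℝ) := by
        rw [← inner_neg_left, neg_sub]
        exact real_inner_comm _ _
      rw [this]
      rw [mul_pow, Real.norm_eq_abs, sq_abs, norm_sub_rev z y₀]
      ring
    -- eventually all terms are < φ y₀
    have hev : ∀ᶠ t in nhdsWithin (0:ℝ) (Set.Ioi 0),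
        ∀ i : Fin n, ‖pt t - q i‖ ^ 2 - ‖x - p i‖ ^ 2 < φ y₀ := by
      rw [Filter.eventually_all]
      intro i
      by_cases hiA : i ∈ A
      · -- active: explicit estimate for 0 < t < 1
        have h1 : ∀ᶠ t in nhdsWithin (0:ℝ) (Set.Ioi 0), t < 1 :=
          Filter.Eventually.filter_mono nhdsWithin_le_nhds
            (Filter.Tendsto.eventually_lt_const (by norm_num) Filter.tendsto_id)
        filter_upwards [h1, self_mem_nhdsWithin] with t ht1 ht0
        rw [Set.mem_Ioi] at ht0
        have h2 := hact i hiA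
        have h3 := hψ i t
        have h4 : ‖y₀ - q i‖ ^ 2 - ‖x - p i‖ ^ 2 ≤ φ y₀ := hφle y₀ i
        have h5 : t * δ ≤ t * (inner ℝ (y₀ - z) (y₀ - q i) : ℝ) :=
          mul_le_mul_of_nonneg_left h2 ht0.le
        have h6 : t ^ 2 * δ < t * δ := by
          nlinarith [mul_lt_mul_of_pos_right ht1 (mul_pos ht0 hδ)]
        have h7 : 0 < t * δ := mul_pos ht0 hδ
        linarith
      · -- inactive: strict at t = 0, by continuity
        have h0 : ‖pt 0 - q i‖ ^ 2 - ‖x - p i‖ ^ 2 < φ y₀ := by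
          have : pt 0 = y₀ := by simp [hptdef]
          rw [this]
          rcases lt_or_ge (‖y₀ - q i‖ ^ 2 - ‖x - p i‖ ^ 2) (φ y₀) with h | h
          · exact h
          · exact absurd (Finset.mem_filter.2 ⟨Finset.mem_univ i, h⟩) hiA
        have hc : Continuous (fun t : ℝ => ‖pt t - q i‖ ^ 2 - ‖x - p i‖ ^ 2) := by
          apply Continuous.sub _ continuous_const
          apply Continuous.pow
          apply Continuous.norm
          apply Continuous.sub _ continuous_const
          exact continuous_const.add (continuous_id.smul continuous_const)
        have := (hc.tendsto 0).eventually_lt_const h0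
        exact this.filter_mono nhdsWithin_le_nhds
    have h1' : ∀ᶠ t in nhdsWithin (0:ℝ) (Set.Ioi 0), t < 1 :=
      Filter.Eventually.filter_mono nhdsWithin_le_nhds
        (Filter.Tendsto.eventually_lt_const (by norm_num) Filter.tendsto_id)
    obtain ⟨t, ht, ht1, ht0'⟩ := (hev.and (h1'.and self_mem_nhdsWithin)).exists
    have ht0 : (0:ℝ) < t := ht0'
    have hmem : pt t ∈ S' := by
      have h := hconv hy₀S (hKS hzK) (by linarith : (0:ℝ) ≤ 1 - t) ht0.le (by ring)
      have he : (1 - t) • y₀ + t • z = pt t := by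
        rw [hptdef]
        simp only [smul_sub, sub_smul, one_smul]
        abel
      rwa [he] at h
    have hlt : φ (pt t) < φ y₀ :=
      (Finset.sup'_lt_iff hBne).2 (fun i _ => ht i)
    exact absurd (isMinOn_iff.1 hmin _ hmem) (not_le.2 hlt)

lemma kstep_exists {n : ℕ} (p q : Fin n → E2) (x : E2) (S' : Set E2) : ∃ y : E2,
    (Convex ℝ S' ∧ IsCompact S' ∧ S'.Nonempty ∧ (∀ i, q i ∈ S') ∧
      ∀ i j, ‖q i - q j‖ ≤ ‖p i - p j‖) →
    y ∈ S' ∧ ∀ i, ‖y - q i‖ ≤ ‖x - p i‖ := by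
  by_cases h : Convex ℝ S' ∧ IsCompact S' ∧ S'.Nonempty ∧ (∀ i, q i ∈ S') ∧
      ∀ i j, ‖q i - q j‖ ≤ ‖p i - p j‖
  · obtain ⟨hc, hk, hn, hq, hl⟩ := h
    obtain ⟨y, hy, hy2⟩ := kirszbraun_onepoint p q x S' hc hk hn hq hl
    exact ⟨y, fun _ => ⟨hy, hy2⟩⟩
  · exact ⟨0, fun h' => absurd h' h⟩

noncomputable def kstep {n : ℕ} (p q : Fin n → E2) (x : E2) (S' : Set E2) : E2 :=
  Classical.choose (kstep_exists p q x S')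

lemma kstep_spec {n : ℕ} (p q : Fin n → E2) (x : E2) (S' : Set E2)
    (h : Convex ℝ S' ∧ IsCompact S' ∧ S'.Nonempty ∧ (∀ i, q i ∈ S') ∧
      ∀ i j, ‖q i - q j‖ ≤ ‖p i - p j‖) :
    kstep p q x S' ∈ S' ∧ ∀ i, ‖kstep p q x S' - q i‖ ≤ ‖x - p i‖ :=
  Classical.choose_spec (kstep_exists p q x S') h

noncomputable def gseq (v : ℕ → E2) (y₁ y₂ y₃ : E2) (S' : Set E2) : ℕ → E2
  | 0 => y₁
  | 1 => y₂
  | 2 => y₃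
  | (n+3) => kstep (fun m : Fin (n+3) => v m)
      (fun m : Fin (n+3) => gseq v y₁ y₂ y₃ S' m) (v (n+3)) S'
  decreasing_by exact m.isLt

lemma gseq_zero (v : ℕ → E2) (y₁ y₂ y₃ : E2) (S' : Set E2) :
    gseq v y₁ y₂ y₃ S' 0 = y₁ := by rw [gseq]

lemma gseq_one (v : ℕ → E2) (y₁ y₂ y₃ : E2) (S' : Set E2) :
    gseq v y₁ y₂ y₃ S' 1 = y₂ := by rw [gseq]

lemma gseq_two (v : ℕ → E2) (y₁ y₂ y₃ : E2) (S' : Set E2) :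
    gseq v y₁ y₂ y₃ S' 2 = y₃ := by rw [gseq]

lemma gseq_prop (v : ℕ → E2) (y₁ y₂ y₃ : E2) (S' : Set E2)
    (hconv : Convex ℝ S') (hcomp : IsCompact S')
    (h1 : y₁ ∈ S') (h2 : y₂ ∈ S') (h3 : y₃ ∈ S')
    (d01 : ‖y₁ - y₂‖ ≤ ‖v 0 - v 1‖) (d02 : ‖y₁ - y₃‖ ≤ ‖v 0 - v 2‖)
    (d12 : ‖y₂ - y₃‖ ≤ ‖v 1 - v 2‖) :
    ∀ n, gseq v y₁ y₂ y₃ S' n ∈ S' ∧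
      ∀ m, m < n → ‖gseq v y₁ y₂ y₃ S' n - gseq v y₁ y₂ y₃ S' m‖ ≤ ‖v n - v m‖ := by
  intro n
  induction n using Nat.strong_induction_on with
  | _ n ih =>
    match n with
    | 0 => exact ⟨by rw [gseq_zero]; exact h1, fun m hm => absurd hm (Nat.not_lt_zero m)⟩
    | 1 =>
      refine ⟨by rw [gseq_one]; exact h2, fun m hm => ?_⟩
      interval_cases m
      · rw [gseq_one, gseq_zero, norm_sub_rev, norm_sub_rev (v 1)]
        exact d01
    | 2 =>
      refine ⟨by rw [gseq_two]; exact h3, fun m hm => ?_⟩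
      interval_cases m
      · rw [gseq_two, gseq_zero, norm_sub_rev, norm_sub_rev (v 2)]
        exact d02
      · rw [gseq_two, gseq_one, norm_sub_rev, norm_sub_rev (v 2)]
        exact d12
    | (k+3) =>
      have hunf : gseq v y₁ y₂ y₃ S' (k+3) = kstep (fun m : Fin (k+3) => v m)
          (fun m : Fin (k+3) => gseq v y₁ y₂ y₃ S' m) (v (k+3)) S' := by
        rw [gseq]
      have hhyp : Convex ℝ S' ∧ IsCompact S' ∧ S'.Nonempty ∧
          (∀ m : Fin (k+3), gseq v y₁ y₂ y₃ S' m ∈ S') ∧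
          ∀ i j : Fin (k+3), ‖gseq v y₁ y₂ y₃ S' i - gseq v y₁ y₂ y₃ S' j‖ ≤ ‖v i - v j‖ := by
        refine ⟨hconv, hcomp, ⟨y₁, h1⟩, fun m => (ih m m.isLt).1, fun i j => ?_⟩
        rcases lt_trichotomy (i : ℕ) (j : ℕ) with hij | hij | hij
        · rw [norm_sub_rev, norm_sub_rev (v i)]
          exact (ih j j.isLt).2 i hij
        · simp [Fin.val_eq_val] at hij
          rw [hij]
          simp
        · exact (ih i i.isLt).2 j hij
      have hs := kstep_spec (fun m : Fin (k+3) => v m)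
        (fun m : Fin (k+3) => gseq v y₁ y₂ y₃ S' m) (v (k+3)) S' hhyp
      rw [← hunf] at hs
      refine ⟨hs.1, fun m hm => hs.2 ⟨m, hm⟩⟩

/-- The triangle case of Theorem 1.1 (= Theorem 3.21) of the paper: if the mutual
distances of `x₁', x₂', x₃'` do not exceed those of `x₁, x₂, x₃`, there is a 1-Lipschitz
map from the filled triangle `Δ = Δ(x₁,x₂,x₃)` to `Δ' = Δ(x₁',x₂',x₃')` sending each
vertex to the corresponding vertex. -/
theorem one_lipschitz_map_between_triangles
    (x₁ x₂ x₃ x₁' x₂' x₃' : EuclideanSpace ℝ (Fin 2))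
    (h12 : ‖x₁' - x₂'‖ ≤ ‖x₁ - x₂‖)
    (h13 : ‖x₁' - x₃'‖ ≤ ‖x₁ - x₃‖)
    (h23 : ‖x₂' - x₃'‖ ≤ ‖x₂ - x₃‖) :
    ∃ f : EuclideanSpace ℝ (Fin 2) → EuclideanSpace ℝ (Fin 2),
      (∀ x ∈ convexHull ℝ ({x₁, x₂, x₃} : Set (EuclideanSpace ℝ (Fin 2))),
        ∀ y ∈ convexHull ℝ ({x₁, x₂, x₃} : Set (EuclideanSpace ℝ (Fin 2))),
          ‖f x - f y‖ ≤ ‖x - y‖) ∧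
      (∀ x ∈ convexHull ℝ ({x₁, x₂, x₃} : Set (EuclideanSpace ℝ (Fin 2))),
        f x ∈ convexHull ℝ ({x₁', x₂', x₃'} : Set (EuclideanSpace ℝ (Fin 2)))) ∧
      f x₁ = x₁' ∧ f x₂ = x₂' ∧ f x₃ = x₃' := by
  classical
  set Δ' : Set E2 := convexHull ℝ ({x₁', x₂', x₃'} : Set E2) with hΔ'def
  have hfin : ({x₁', x₂', x₃'} : Set E2).Finite := (Set.finite_singleton _).insert _ |>.insert _
  have hcomp : IsCompact Δ' := hfin.isCompact_convexHull ℝ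
  have hconv : Convex ℝ Δ' := convex_convexHull ℝ _
  have hclosed : IsClosed Δ' := hcomp.isClosed
  have hm1 : x₁' ∈ Δ' := subset_convexHull ℝ _ (by simp)
  have hm2 : x₂' ∈ Δ' := subset_convexHull ℝ _ (by simp)
  have hm3 : x₃' ∈ Δ' := subset_convexHull ℝ _ (by simp)
  obtain ⟨u, hu⟩ := TopologicalSpace.exists_dense_seq E2
  set v : ℕ → E2 := fun n => if n = 0 then x₁ else if n = 1 then x₂ else
    if n = 2 then x₃ else u (n - 3) with hvdef
  have hv0 : v 0 = x₁ := by simp [hvdef]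
  have hv1 : v 1 = x₂ := by simp [hvdef]
  have hv2 : v 2 = x₃ := by simp [hvdef]
  have hv3 : ∀ k, v (k + 3) = u k := by
    intro k
    simp only [hvdef]
    rw [if_neg (by omega), if_neg (by omega), if_neg (by omega)]
    simp
  have hdr : DenseRange v := by
    have hsub : Set.range u ⊆ Set.range v := by
      rintro y ⟨k, rfl⟩
      exact ⟨k + 3, hv3 k⟩
    exact hu.mono hsub
  set g : ℕ → E2 := gseq v x₁' x₂' x₃' Δ' with hgdef
  have hg := gseq_prop v x₁' x₂' x₃' Δ' hconv hcomp hm1 hm2 hm3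
    (by rw [hv0, hv1]; exact h12) (by rw [hv0, hv2]; exact h13) (by rw [hv1, hv2]; exact h23)
  have hgl : ∀ n m, ‖g n - g m‖ ≤ ‖v n - v m‖ := by
    intro n m
    rcases lt_trichotomy n m with h | h | h
    · rw [norm_sub_rev, norm_sub_rev (v n)]
      exact (hg m).2 n h
    · rw [h]; simp
    · exact (hg n).2 m h
  have hgm : ∀ n, g n ∈ Δ' := fun n => (hg n).1
  -- approximating sequences
  have hap : ∀ (x : E2) (k : ℕ), ∃ n, dist x (v n) < 1 / ((k : ℝ) + 1) := by
    intro x k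
    exact hdr.exists_dist_lt x (by positivity)
  choose seq hseq using hap
  set a : E2 → ℕ → E2 := fun x k => g (seq x k) with hadef
  have hcauchy : ∀ x, CauchySeq (a x) := by
    intro x
    refine cauchySeq_of_le_tendsto_0 (fun N => 2 / ((N : ℝ) + 1)) ?_ ?_
    · intro n m N hn hm
      have e1 : dist (a x n) (a x m) ≤ dist (v (seq x n)) (v (seq x m)) := by
        rw [dist_eq_norm, dist_eq_norm]
        exact hgl _ _
      have e2 : dist (v (seq x n)) (v (seq x m)) ≤ dist x (v (seq x n)) + dist x (v (seq x m)) :=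
        dist_triangle_left _ _ _
      have e3 : (1 : ℝ) / ((n : ℝ) + 1) ≤ 1 / ((N : ℝ) + 1) := by
        apply one_div_le_one_div_of_le (by positivity)
        exact_mod_cast by omega
      have e4 : (1 : ℝ) / ((m : ℝ) + 1) ≤ 1 / ((N : ℝ) + 1) := by
        apply one_div_le_one_div_of_le (by positivity)
        exact_mod_cast by omega
      have := hseq x n
      have := hseq x m
      calc dist (a x n) (a x m) ≤ dist x (v (seq x n)) + dist x (v (seq x m)) := e1.trans e2
        _ ≤ 1 / ((N : ℝ) + 1) + 1 / ((N : ℝ) + 1) := by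
            apply add_le_add ((hseq x n).le.trans e3) ((hseq x m).le.trans e4)
        _ = 2 / ((N : ℝ) + 1) := by ring
    · have h1 : Filter.Tendsto (fun N : ℕ => 1 / ((N : ℝ) + 1)) Filter.atTop (nhds 0) :=
        tendsto_one_div_add_atTop_nhds_zero_nat
      have := h1.const_mul (2 : ℝ)
      simp only [mul_zero] at this
      convert this using 2 with N
      ring
  have hex : ∀ x, ∃ y, Filter.Tendsto (a x) Filter.atTop (nhds y) := fun x =>
    cauchySeq_tendsto_of_complete (hcauchy x)
  choose f hft using hex
  have hvx : ∀ x, Filter.Tendsto (fun k => v (seq x k)) Filter.atTop (nhds x) := by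
    intro x
    rw [tendsto_iff_dist_tendsto_zero]
    refine squeeze_zero (fun k => dist_nonneg) (fun k => ?_)
      tendsto_one_div_add_atTop_nhds_zero_nat
    rw [dist_comm]
    exact (hseq x k).le
  have hlip : ∀ x y, ‖f x - f y‖ ≤ ‖x - y‖ := by
    intro x y
    have t1 : Filter.Tendsto (fun k => ‖a x k - a y k‖) Filter.atTop (nhds ‖f x - f y‖) :=
      ((hft x).sub (hft y)).norm
    have t2 : Filter.Tendsto (fun k => ‖v (seq x k) - v (seq y k)‖) Filter.atTop
        (nhds ‖x - y‖) := ((hvx x).sub (hvx y)).norm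
    exact le_of_tendsto_of_tendsto' t1 t2 (fun k => hgl _ _)
  have hfv : ∀ n, f (v n) = g n := by
    intro n
    have t1 : Filter.Tendsto (a (v n)) Filter.atTop (nhds (g n)) := by
      rw [tendsto_iff_dist_tendsto_zero]
      refine squeeze_zero (fun k => dist_nonneg) (fun k => ?_)
        tendsto_one_div_add_atTop_nhds_zero_nat
      calc dist (a (v n) k) (g n) ≤ dist (v (seq (v n) k)) (v n) := by
            rw [dist_eq_norm, dist_eq_norm]; exact hgl _ _
        _ ≤ 1 / ((k : ℝ) + 1) := by rw [dist_comm]; exact (hseq (v n) k).le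
    exact tendsto_nhds_unique (hft (v n)) t1
  have hmem : ∀ x, f x ∈ Δ' := by
    intro x
    exact hclosed.mem_of_tendsto (hft x) (Filter.Eventually.of_forall (fun k => hgm _))
  refine ⟨f, fun x _ y _ => hlip x y, fun x _ => hmem x, ?_, ?_, ?_⟩
  · rw [← hv0, hfv 0, hgdef, gseq_zero]
  · rw [← hv1, hfv 1, hgdef, gseq_one]
  · rw [← hv2, hfv 2, hgdef, gseq_two]
end
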